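/- arXiv:1301.5045 — 4 statements merged into one kernel-verified Lean document; each statement's English description precedes it below -/
import Mathlib

section
/- Under Hypothesis (H), write Q = t(y)·T(x,y) with t in k[y] the content and T the primitive part of Q with respect to x; let t* and T* be the squarefree parts of t and T with respect to y (so that Q* = t*·T*). For each natural number i let N_i in k[x,y] be defined by D_x^i(f) = N_i/(Q·(T*)^i), where f = P/Q. Fix ρ in ℕ and η_0, …, η_ρ in k(x); set F = Σ_{i=0}^{ρ} η_i·D_x^i(f), N = Σ_{i=0}^{ρ} η_i·N_i·(T*)^{ρ−i}, and H = −D_y(Q)/Q^- − ρ·t*·D_y(T*). If F is nonzero, then (N, H, Q*) is a differential Gosper form of D_y(F)/F over the field k(x): namely D_y(F)/F = D_y(N)/N + H/Q*, and gcd(Q*, H − τ·D_y(Q*)) = 1 for every natural number τ. -/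
open Polynomial

noncomputable section

/-- A map is a derivation: it is additive and satisfies the Leibniz rule. -/
def IsDeriv {F : Type*} [CommRing F] (D : F → F) : Prop :=
  (∀ a b, D (a + b) = D a + D b) ∧ ∀ a b, D (a * b) = a * D b + b * D a

/-- Degree in `x` of an element of `k[x][y]` (inner variable `x`, outer variable `y`). -/
def degX {k : Type*} [Field k] (Q : Polynomial (Polynomial k)) : ℕ :=
  Q.support.sup fun i => (Q.coeff i).natDegree

/-- Partial derivative with respect to `x` on `k[x][y]`. -/
def derivX {k : Type*} [Field k] (Q : Polynomial (Polynomial k)) : Polynomial (Polynomial k) :=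
  Q.sum fun i a => Polynomial.C (Polynomial.derivative a) * Polynomial.X ^ i

/-- The embedding `k[x][y] → k(x)(y)`. -/
def toF {k : Type*} [Field k] : Polynomial (Polynomial k) →+* RatFunc (RatFunc k) :=
  (algebraMap (Polynomial (RatFunc k)) (RatFunc (RatFunc k))).comp
    (Polynomial.mapRingHom (algebraMap (Polynomial k) (RatFunc k)))

/-- The embedding `k(x) → k(x)(y)`. -/
def ratToF {k : Type*} [Field k] : RatFunc k →+* RatFunc (RatFunc k) :=
  (algebraMap (Polynomial (RatFunc k)) (RatFunc (RatFunc k))).comp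
    (Polynomial.C : RatFunc k →+* Polynomial (RatFunc k))

/-- The embedding `k(x)[y] → k(x)(y)`. -/
def kyToF {k : Type*} [Field k] : Polynomial (RatFunc k) →+* RatFunc (RatFunc k) :=
  algebraMap (Polynomial (RatFunc k)) (RatFunc (RatFunc k))

/-- The embedding `k[x][y] → k(x)[y]`. -/
def toKy {k : Type*} [Field k] : Polynomial (Polynomial k) →+* Polynomial (RatFunc k) :=
  Polynomial.mapRingHom (algebraMap (Polynomial k) (RatFunc k))

/-- The embedding `k[y] → k[x][y]` (a polynomial in `y` viewed in `k[x][y]`). -/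
def yToXY {k : Type*} [Field k] : Polynomial k →+* Polynomial (Polynomial k) :=
  Polynomial.mapRingHom (Polynomial.C : k →+* Polynomial k)

/-- The Hermite matrix associated with a factorisation `Q = Qs * Qneg`, with respect to the
monomial bases: its columns are the coefficient vectors (in `y`, coefficients in `k[x]`) of
`Qs * D_y(y^j) - E * y^j` for `j < dm` (where `E = Qs * D_y(Qneg) / Qneg`) and of
`Qneg * y^j` for `j < dy - dm`. -/
def hermiteMat {k : Type*} [Field k] (Qs Qneg E : Polynomial (Polynomial k)) (dy dm : ℕ) :
    Matrix (Fin dy) (Fin dy) (Polynomial k) :=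
  Matrix.of fun i j =>
    if (j : ℕ) < dm then
      (Qs * Polynomial.derivative (Polynomial.X ^ (j : ℕ)) - E * Polynomial.X ^ (j : ℕ)).coeff i
    else
      (Qneg * Polynomial.X ^ ((j : ℕ) - dm)).coeff i


section Aux
open scoped nonZeroDivisors
set_option linter.unusedSectionVars false

variable {k : Type*} [Field k] [CharZero k]

lemma toKy_injective : Function.Injective (toKy (k := k)) :=
  Polynomial.map_injective _ (IsFractionRing.injective (Polynomial k) (RatFunc k))

lemma algC_unit {c : Polynomial k} (hc : c ≠ 0) :
    IsUnit (Polynomial.C (algebraMap (Polynomial k) (RatFunc k) c)) :=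
  Polynomial.isUnit_C.mpr (isUnit_iff_ne_zero.mpr fun h => hc
    ((injective_iff_map_eq_zero _).mp (IsFractionRing.injective (Polynomial k) (RatFunc k)) _ h))

lemma toKy_C_content_mul [NormalizedGCDMonoid (Polynomial k)] (A : Polynomial (Polynomial k)) :
    toKy A = Polynomial.C (algebraMap (Polynomial k) (RatFunc k) A.content) * toKy A.primPart := by
  conv_lhs => rw [A.eq_C_content_mul_primPart]
  rw [map_mul]
  simp [toKy]

/-- prime representative of an irreducible element of `k(x)[y]`. -/
lemma exists_rep {p : Polynomial (RatFunc k)} (hp : Irreducible p) :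
    ∃ p₀ : Polynomial (Polynomial k), p₀.IsPrimitive ∧ Prime p₀ ∧
      ∀ A : Polynomial (Polynomial k), p ∣ toKy A → p₀ ∣ A := by
  letI : NormalizationMonoid (Polynomial k) := UniqueFactorizationMonoid.normalizationMonoid.toNormalizationMonoid
  letI : NormalizedGCDMonoid (Polynomial k) := UniqueFactorizationMonoid.toNormalizedGCDMonoid _
  obtain ⟨⟨c, c0⟩, hc⟩ := IsLocalization.integerNormalization_map_to_map (Polynomial k)⁰ p
  set n := IsLocalization.integerNormalization (Polynomial k)⁰ p with hn
  have hcne : (c : Polynomial k) ≠ 0 := nonZeroDivisors.ne_zero c0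
  have hpne : p ≠ 0 := hp.ne_zero
  have hnne : n ≠ 0 := by
    intro h
    rw [hn, IsFractionRing.integerNormalization_eq_zero_iff] at h
    exact hpne h
  have hcontent : n.content ≠ 0 := fun h => hnne (Polynomial.content_eq_zero_iff.mp h)
  have hmapn : toKy n = Polynomial.C (algebraMap (Polynomial k) (RatFunc k) c) * p := by
    show n.map (algebraMap (Polynomial k) (RatFunc k)) = _
    rw [hc, Algebra.smul_def, Polynomial.algebraMap_apply]
  have hbeq : Polynomial.C (algebraMap (Polynomial k) (RatFunc k) n.content) * toKy n.primPart
      = Polynomial.C (algebraMap (Polynomial k) (RatFunc k) c) * p := by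
    rw [← toKy_C_content_mul, hmapn]
  have hcu := algC_unit (k := k) hcontent
  have hcu' := algC_unit (k := k) hcne
  have h6 : toKy n.primPart ∣ p := by
    rw [← hcu'.dvd_mul_left, ← hbeq]
    exact Dvd.intro_left _ rfl
  have h7 : p ∣ toKy n.primPart := by
    rw [← hcu.dvd_mul_left, hbeq]
    exact Dvd.intro_left _ rfl
  have hassoc : Associated (toKy n.primPart) p := associated_of_dvd_dvd h6 h7
  have hprimP : n.primPart.IsPrimitive := n.isPrimitive_primPart
  have hirr : Irreducible n.primPart := by
    rw [hprimP.irreducible_iff_irreducible_map_fraction_map (K := RatFunc k)]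
    exact hassoc.symm.irreducible hp
  refine ⟨n.primPart, hprimP, (UniqueFactorizationMonoid.irreducible_iff_prime).mp hirr, ?_⟩
  intro A hdvd
  by_cases hA : A = 0
  · simp [hA]
  have h2 : toKy n.primPart ∣ toKy A := h6.trans hdvd
  have hAcontent : A.content ≠ 0 := fun h => hA (Polynomial.content_eq_zero_iff.mp h)
  have h4 : toKy n.primPart ∣ toKy A.primPart := by
    rw [toKy_C_content_mul A, (algC_unit (k := k) hAcontent).dvd_mul_left] at h2
    exact h2
  have h5 : n.primPart ∣ A.primPart :=
    hprimP.dvd_of_fraction_map_dvd_fraction_map h4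
  exact h5.trans (A.primPart_dvd)

lemma primitive_nonunit_natDegree_pos {p₀ : Polynomial (Polynomial k)}
    (hprim : p₀.IsPrimitive) (hnu : ¬ IsUnit p₀) : 0 < p₀.natDegree := by
  rcases Nat.eq_zero_or_pos p₀.natDegree with h | h
  · refine absurd ?_ hnu
    rw [Polynomial.eq_C_of_natDegree_eq_zero h, Polynomial.isUnit_C]
    exact hprim _ (by rw [← Polynomial.eq_C_of_natDegree_eq_zero h])
  · exact h

lemma prime_not_dvd_derivative {A p₀ : Polynomial (Polynomial k)}
    (hA : Squarefree A) (hp : Prime p₀) (hprim : p₀.IsPrimitive)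
    (hdvd : p₀ ∣ A) : ¬ p₀ ∣ Polynomial.derivative A := by
  intro hdd
  obtain ⟨B, rfl⟩ := hdvd
  rw [Polynomial.derivative_mul] at hdd
  have hne : Polynomial.derivative p₀ ≠ 0 := by
    intro h
    have := Polynomial.natDegree_eq_zero_of_derivative_eq_zero h
    exact absurd (primitive_nonunit_natDegree_pos hprim hp.not_unit) (by omega)
  have h1 : ¬ p₀ ∣ Polynomial.derivative p₀ := by
    intro h
    have := Polynomial.natDegree_le_of_dvd h hne
    have hd0 : p₀.natDegree ≠ 0 :=
      Nat.pos_iff_ne_zero.mp (primitive_nonunit_natDegree_pos hprim hp.not_unit)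
    have h2 := Polynomial.natDegree_derivative_lt hd0
    omega
  have h2 : ¬ p₀ ∣ B := fun h => hp.not_unit (hA p₀ (mul_dvd_mul_left p₀ h))
  have h3 : p₀ ∣ Polynomial.derivative p₀ * B := (dvd_add_right (Dvd.intro _ rfl)).mp (by
    rwa [add_comm] at hdd)
  exact (hp.dvd_or_dvd h3).elim h1 h2

lemma derivative_finset_prod {R ι : Type*} [CommRing R] [DecidableEq ι]
    (s : Finset ι) (f : ι → Polynomial R) :
    Polynomial.derivative (∏ i ∈ s, f i)
      = ∑ i ∈ s, Polynomial.derivative (f i) * ∏ j ∈ s.erase i, f j := by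
  induction s using Finset.induction_on with
  | empty => simp
  | @insert a s ha ih =>
    rw [Finset.prod_insert ha, Polynomial.derivative_mul, ih, Finset.sum_insert ha,
      Finset.erase_insert ha, Finset.mul_sum]
    have hterm : ∀ i ∈ s, Polynomial.derivative (f i) * ∏ j ∈ (insert a s).erase i, f j
        = f a * (Polynomial.derivative (f i) * ∏ j ∈ s.erase i, f j) := by
      intro i hi
      have hia : i ≠ a := fun h => ha (h ▸ hi)
      rw [Finset.erase_insert_of_ne (Ne.symm hia), Finset.prod_insert
        (fun h => ha (Finset.mem_of_mem_erase h))]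
      ring
    rw [Finset.sum_congr rfl hterm]

lemma key_prod {R : Type*} [CommRing R] (m : ℕ) (Qi : ℕ → Polynomial (Polynomial R)) :
    Polynomial.derivative (∏ i ∈ Finset.range m, Qi i ^ (i + 1)) =
      (∏ i ∈ Finset.range m, Qi i ^ i) *
        ∑ i ∈ Finset.range m, ((i : Polynomial (Polynomial R)) + 1) *
          (Polynomial.derivative (Qi i) * ∏ j ∈ (Finset.range m).erase i, Qi j) := by
  rw [derivative_finset_prod, Finset.mul_sum]
  refine Finset.sum_congr rfl fun i hi => ?_
  rw [Polynomial.derivative_pow_succ]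
  have e1 : ∏ j ∈ (Finset.range m).erase i, Qi j ^ (j + 1)
      = (∏ j ∈ (Finset.range m).erase i, Qi j ^ j)
        * ∏ j ∈ (Finset.range m).erase i, Qi j := by
    rw [← Finset.prod_mul_distrib]
    exact Finset.prod_congr rfl fun j _ => pow_succ _ _
  have e2 : ∏ j ∈ Finset.range m, Qi j ^ j
      = Qi i ^ i * ∏ j ∈ (Finset.range m).erase i, Qi j ^ j :=
    (Finset.mul_prod_erase _ _ hi).symm
  rw [e1, e2]
  have hC : (Polynomial.C ((i : Polynomial R) + 1) : Polynomial (Polynomial R))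
      = (i : Polynomial (Polynomial R)) + 1 := by
    rw [map_add, map_one, Polynomial.C_eq_natCast]
  rw [hC]
  ring

lemma natCast_isUnit {n : ℕ} (hn : n ≠ 0) : IsUnit ((n : Polynomial (Polynomial k))) := by
  have h1 : ((n : Polynomial (Polynomial k)))
      = Polynomial.C (Polynomial.C ((n : k))) := by
    rw [Polynomial.C_eq_natCast, Polynomial.C_eq_natCast]
  rw [h1, Polynomial.isUnit_C, Polynomial.isUnit_C]
  exact isUnit_iff_ne_zero.mpr (Nat.cast_ne_zero.mpr hn)

end Aux

/-- Lemma `le:dGf-for-F'/F`. Under Hypothesis (H), write `Q = t(y)·T(x,y)`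
with `t` the content and `T` the primitive part of `Q` w.r.t. `x`, and let `t*`, `T*` be the
squarefree parts of `t`, `T` w.r.t. `y` (so `Q* = t*·T*`). With `Nᵢ` defined by
`D_x^i(f) = Nᵢ/(Q·(T*)^i)`, `F = ∑ ηᵢ·D_x^i(f)`, `N = ∑ ηᵢ·Nᵢ·(T*)^{ρ−i}` and
`H = −D_y(Q)/Q⁻ − ρ·t*·D_y(T*)`: if `F ≠ 0` then `(N, H, Q*)` is a differential Gosper form
of `D_y(F)/F`, i.e. `D_y(F)/F = D_y(N)/N + H/Q*` and `gcd(Q*, H − τ·D_y(Q*)) = 1` in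
`k(x)[y]` for every natural number `τ`. -/
theorem stmt_13 {k : Type*} [Field k] [CharZero k]
    (P Q : Polynomial (Polynomial k))
    (hP : P ≠ 0) (hQ : Q ≠ 0)
    (hPQdeg : P.degree < Q.degree)
    (hPQcop : IsRelPrime P Q)
    (hQprimY : Q.IsPrimitive)
    (m : ℕ) (hm : 0 < m) (q : Polynomial k) (Qi : ℕ → Polynomial (Polynomial k))
    (hfac : Q = Polynomial.C q * ∏ i ∈ Finset.range m, Qi i ^ (i + 1))
    (hQiprim : ∀ i < m, (Qi i).IsPrimitive)
    (hQisqf : ∀ i < m, Squarefree (Qi i))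
    (hQicop : ∀ i < m, ∀ j < m, i ≠ j → IsRelPrime (Qi i) (Qi j))
    (hQim : 0 < (Qi (m - 1)).natDegree)
    (Qs Qneg : Polynomial (Polynomial k))
    (hQs : Qs = ∏ i ∈ Finset.range m, Qi i)
    (hQneg : Q = Qs * Qneg)
    (Dy : RatFunc (RatFunc k) → RatFunc (RatFunc k)) (hDy : IsDeriv Dy)
    (hDyval : ∀ A : Polynomial (RatFunc k), Dy (kyToF A) = kyToF (Polynomial.derivative A))
    (Dx : RatFunc (RatFunc k) → RatFunc (RatFunc k)) (hDx : IsDeriv Dx)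
    (hDxval : ∀ A : Polynomial (Polynomial k), Dx (toF A) = toF (derivX A))
    -- content/primitive part of `Q` with respect to `x`
    (t : Polynomial k) (T : Polynomial (Polynomial k))
    (hQtT : Q = yToXY t * T)
    (hTprim : ∀ s : Polynomial k, yToXY s ∣ T → IsUnit s)
    -- squarefree parts of `t` and `T` with respect to `y`, with `Q* = t*·T*`
    (ts : Polynomial k) (Ts : Polynomial (Polynomial k))
    (hts : ts ∣ t) (hTs : Ts ∣ T)
    (hsplit : Qs = yToXY ts * Ts)
    -- the numerators `Nᵢ` of the derivatives of `f`
    (Nseq : ℕ → Polynomial (Polynomial k))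
    (hNseq : ∀ i : ℕ, Dx^[i] (toF P / toF Q) = toF (Nseq i) / (toF Q * toF Ts ^ i))
    (ρ : ℕ) (η : Fin (ρ + 1) → RatFunc k)
    -- `H = −D_y(Q)/Q⁻ − ρ·t*·D_y(T*)`, cleared of the denominator `Q⁻`
    (Hp : Polynomial (Polynomial k))
    (hHp : Hp * Qneg =
      -Polynomial.derivative Q - (ρ • (yToXY ts * Polynomial.derivative Ts)) * Qneg)
    -- `N = ∑ ηᵢ·Nᵢ·(T*)^{ρ−i}`
    (N : Polynomial (RatFunc k))
    (hN : N = ∑ i : Fin (ρ + 1),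
      Polynomial.C (η i) * toKy (Nseq (i : ℕ) * Ts ^ (ρ - (i : ℕ))))
    (hFne : ∑ i : Fin (ρ + 1), ratToF (η i) * Dx^[(i : ℕ)] (toF P / toF Q) ≠ 0) :
    Dy (∑ i : Fin (ρ + 1), ratToF (η i) * Dx^[(i : ℕ)] (toF P / toF Q)) /
        (∑ i : Fin (ρ + 1), ratToF (η i) * Dx^[(i : ℕ)] (toF P / toF Q)) =
      Dy (kyToF N) / kyToF N + toF Hp / toF Qs ∧
    ∀ τ : ℕ, IsCoprime (toKy Qs) (toKy (Hp - τ • Polynomial.derivative Qs)) := by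
  classical
  have hQs0 : Qs ≠ 0 := fun h => hQ (by rw [hQneg, h, zero_mul])
  have hQneg0 : Qneg ≠ 0 := fun h => hQ (by rw [hQneg, h, mul_zero])
  have hT0 : T ≠ 0 := fun h => hQ (by rw [hQtT, h, mul_zero])
  have hTs0 : Ts ≠ 0 := fun h => hT0 (zero_dvd_iff.mp (h ▸ hTs))
  have hts0 : yToXY ts ≠ 0 := left_ne_zero_of_mul (hsplit ▸ hQs0)
  set W : ℕ → Polynomial (Polynomial k) := fun i =>
    Polynomial.derivative (Qi i) * ∏ j ∈ (Finset.range m).erase i, Qi j with hW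
  have hQneg' : Qneg = Polynomial.C q * ∏ i ∈ Finset.range m, Qi i ^ i := by
    have h1 : Qs * Qneg = Qs * (Polynomial.C q * ∏ i ∈ Finset.range m, Qi i ^ i) := by
      rw [← hQneg, hfac, hQs]
      have h2 : ∏ i ∈ Finset.range m, Qi i ^ (i + 1)
          = (∏ i ∈ Finset.range m, Qi i ^ i) * ∏ i ∈ Finset.range m, Qi i := by
        rw [← Finset.prod_mul_distrib]
        exact Finset.prod_congr rfl fun i _ => pow_succ _ _
      rw [h2]; ring
    exact mul_left_cancel₀ hQs0 h1
  have hDQ : Polynomial.derivative Q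
      = Qneg * ∑ i ∈ Finset.range m, ((i : Polynomial (Polynomial k)) + 1) * W i := by
    rw [hfac, Polynomial.derivative_C_mul, key_prod, hQneg']
    ring
  have hDQs : Polynomial.derivative Qs = ∑ i ∈ Finset.range m, W i := by
    rw [hQs, derivative_finset_prod]
  have hHpF : Hp = -∑ i ∈ Finset.range m, ((i : Polynomial (Polynomial k)) + 1) * W i
      - (ρ : Polynomial (Polynomial k)) * (yToXY ts * Polynomial.derivative Ts) := by
    apply mul_right_cancel₀ hQneg0
    have hHp2 := hHp
    rw [nsmul_eq_mul, hDQ] at hHp2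
    linear_combination hHp2
  constructor
  · -- Part 1
    have hinj : Function.Injective (toF (k := k)) := fun a b h =>
      toKy_injective (IsFractionRing.injective (Polynomial (RatFunc k)) (RatFunc (RatFunc k)) h)
    have hQF : toF Q ≠ 0 := fun h => hQ (hinj (by simpa using h))
    have hTsF : toF Ts ≠ 0 := fun h => hTs0 (hinj (by simpa using h))
    have hQsF : toF Qs ≠ 0 := fun h => hQs0 (hinj (by simpa using h))
    set F : RatFunc (RatFunc k) :=
      ∑ i : Fin (ρ + 1), ratToF (η i) * Dx^[(i : ℕ)] (toF P / toF Q) with hFdef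
    set d : RatFunc (RatFunc k) := toF Q * toF Ts ^ ρ with hddef
    have hd0 : d ≠ 0 := mul_ne_zero hQF (pow_ne_zero _ hTsF)
    have hFd : F * d = kyToF N := by
      have hterm : ∀ i : Fin (ρ + 1),
          (ratToF (η i) * Dx^[(i : ℕ)] (toF P / toF Q)) * d
            = kyToF (Polynomial.C (η i) * toKy (Nseq (i : ℕ) * Ts ^ (ρ - (i : ℕ)))) := by
        intro i
        rw [hNseq (i : ℕ), map_mul]
        have h1 : kyToF (Polynomial.C (η i)) = ratToF (η i) := rfl
        have h2 : kyToF (toKy (Nseq (i : ℕ) * Ts ^ (ρ - (i : ℕ))))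
            = toF (Nseq (i : ℕ)) * toF Ts ^ (ρ - (i : ℕ)) := by
          show toF (Nseq (i : ℕ) * Ts ^ (ρ - (i : ℕ))) = _
          rw [map_mul, map_pow]
        rw [h1, h2, hddef]
        have hile : (i : ℕ) ≤ ρ := Nat.lt_succ_iff.mp i.isLt
        have hpow : toF Ts ^ ρ = toF Ts ^ (i : ℕ) * toF Ts ^ (ρ - (i : ℕ)) := by
          rw [← pow_add]
          congr 1
          omega
        rw [hpow]
        field_simp
      calc F * d = ∑ i : Fin (ρ + 1), (ratToF (η i) * Dx^[(i : ℕ)] (toF P / toF Q)) * d :=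
            Finset.sum_mul _ _ _
        _ = ∑ i : Fin (ρ + 1),
              kyToF (Polynomial.C (η i) * toKy (Nseq (i : ℕ) * Ts ^ (ρ - (i : ℕ)))) :=
            Finset.sum_congr rfl fun i _ => hterm i
        _ = kyToF N := by rw [hN, map_sum]
    have hn0 : kyToF N ≠ 0 := hFd ▸ mul_ne_zero hFne hd0
    have hDyd : Dy d = toF (Polynomial.derivative (Q * Ts ^ ρ)) := by
      have h1 : d = toF (Q * Ts ^ ρ) := by rw [hddef, map_mul, map_pow]
      rw [h1]
      show Dy (kyToF (toKy (Q * Ts ^ ρ))) = _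
      rw [hDyval]
      show kyToF (Polynomial.derivative ((Q * Ts ^ ρ).map _)) = _
      rw [Polynomial.derivative_map]
      rfl
    have e1 : d * Dy F = Dy (kyToF N) - F * Dy d := by
      have h := congrArg Dy hFd
      rw [hDy.2 F d] at h
      linear_combination h
    have polyId : Hp * ((Q * Ts ^ ρ) * Ts) = -(Polynomial.derivative (Q * Ts ^ ρ) * (Qs * Ts)) := by
      have hpow2 : (ρ : Polynomial (Polynomial k)) * Ts ^ (ρ - 1) * Polynomial.derivative Ts * Ts
          = (ρ : Polynomial (Polynomial k)) * Ts ^ ρ * Polynomial.derivative Ts := by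
        cases ρ with
        | zero => simp
        | succ n => rw [Nat.add_sub_cancel, pow_succ]; ring
      rw [Polynomial.derivative_mul, Polynomial.derivative_pow, Polynomial.C_eq_natCast]
      have hHp2 := hHp
      rw [nsmul_eq_mul] at hHp2
      linear_combination (Qs * Ts ^ ρ * Ts) * hHp2
        + (Hp * Ts ^ ρ * Ts + (ρ : Polynomial (Polynomial k)) * Polynomial.derivative Ts * Qs * Ts ^ ρ) * hQneg
        + ((ρ : Polynomial (Polynomial k)) * Polynomial.derivative Ts * Qs * Ts ^ ρ * Qneg) * hsplit
        + (Q * Qs) * hpow2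
    have hDyd2 : (toF Hp) * d = -(Dy d * toF Qs) := by
      apply mul_right_cancel₀ hTsF
      have h2 := congrArg (toF (k := k)) polyId
      simp only [map_mul, map_neg, map_pow] at h2
      rw [← hddef] at h2
      rw [hDyd]
      linear_combination h2
    have hstep1 : Dy F / F = Dy (kyToF N) / kyToF N - Dy d / d := by
      rw [div_sub_div _ _ hn0 hd0, div_eq_div_iff hFne (mul_ne_zero hn0 hd0)]
      linear_combination kyToF N * e1 - Dy (kyToF N) * hFd
    have hstep2 : toF Hp / toF Qs = -(Dy d / d) := by
      rw [← neg_div, div_eq_div_iff hQsF hd0]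
      linear_combination hDyd2
    rw [hstep1, hstep2]
    ring
  · -- Part 2
    intro τ
    have hQsKy0 : toKy Qs ≠ 0 := fun h => hQs0 (toKy_injective (by simpa using h))
    apply isCoprime_of_irreducible_dvd (fun hcon => hQsKy0 hcon.1)
    intro z hz hz1 hz2
    obtain ⟨p₀, hprim, hp, htrans⟩ := exists_rep hz
    have hd1 : p₀ ∣ Qs := htrans _ hz1
    have hd2 : p₀ ∣ Hp - τ • Polynomial.derivative Qs := htrans _ hz2
    obtain ⟨l, hl, hdl⟩ := hp.exists_mem_finset_dvd
      (show p₀ ∣ ∏ i ∈ Finset.range m, Qi i from hQs ▸ hd1)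
    have hlm : l < m := Finset.mem_range.mp hl
    have hWl : ¬ p₀ ∣ W l := by
      intro h
      rcases hp.dvd_or_dvd h with h' | h'
      · exact prime_not_dvd_derivative (hQisqf l hlm) hp hprim hdl h'
      · obtain ⟨j, hj, hdj⟩ := hp.exists_mem_finset_dvd h'
        have hjl : j ≠ l := Finset.ne_of_mem_erase hj
        have hjm : j < m := Finset.mem_range.mp (Finset.mem_of_mem_erase hj)
        exact hp.not_unit (hQicop l hlm j hjm (Ne.symm hjl) hdl hdj)
    have hWi : ∀ i ∈ (Finset.range m).erase l, p₀ ∣ W i := by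
      intro i hi
      have hil : i ≠ l := Finset.ne_of_mem_erase hi
      have him : i ∈ Finset.range m := Finset.mem_of_mem_erase hi
      have hli : l ∈ (Finset.range m).erase i := Finset.mem_erase.mpr ⟨Ne.symm hil, hl⟩
      exact Dvd.dvd.mul_left (hdl.trans (Finset.dvd_prod_of_mem _ hli)) _
    have hS1 : p₀ ∣ ∑ i ∈ (Finset.range m).erase l,
        ((i : Polynomial (Polynomial k)) + 1) * W i :=
      Finset.dvd_sum fun i hi => (hWi i hi).mul_left _
    have hS2 : p₀ ∣ ∑ i ∈ (Finset.range m).erase l, W i :=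
      Finset.dvd_sum fun i hi => hWi i hi
    have hsplit1 : ∑ i ∈ Finset.range m, ((i : Polynomial (Polynomial k)) + 1) * W i
        = ((l : Polynomial (Polynomial k)) + 1) * W l
          + ∑ i ∈ (Finset.range m).erase l, ((i : Polynomial (Polynomial k)) + 1) * W i :=
      (Finset.add_sum_erase _ _ hl).symm
    have hsplit2 : ∑ i ∈ Finset.range m, W i
        = W l + ∑ i ∈ (Finset.range m).erase l, W i :=
      (Finset.add_sum_erase _ _ hl).symm
    have hVl : p₀ ∣ ((l : Polynomial (Polynomial k)) + 1 + (τ : Polynomial (Polynomial k))) * W l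
        + (ρ : Polynomial (Polynomial k)) * (yToXY ts * Polynomial.derivative Ts) := by
      have hG : ((l : Polynomial (Polynomial k)) + 1 + (τ : Polynomial (Polynomial k))) * W l
          + (ρ : Polynomial (Polynomial k)) * (yToXY ts * Polynomial.derivative Ts)
          = -(Hp - τ • Polynomial.derivative Qs)
            - ∑ i ∈ (Finset.range m).erase l, ((i : Polynomial (Polynomial k)) + 1) * W i
            - (τ : Polynomial (Polynomial k)) * ∑ i ∈ (Finset.range m).erase l, W i := by
        rw [nsmul_eq_mul, hHpF, hDQs, hsplit1, hsplit2]; ring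
      rw [hG]
      exact dvd_sub (dvd_sub (dvd_neg.mpr hd2) hS1) (hS2.mul_left _)
    have hfin : p₀ ∣ yToXY ts ∨ p₀ ∣ Ts := hp.dvd_or_dvd (hsplit ▸ hd1)
    have hkey : ∃ n : ℕ, n ≠ 0 ∧ p₀ ∣ (n : Polynomial (Polynomial k)) * W l := by
      rcases hfin with hcase | hcase
      · refine ⟨l + 1 + τ, by omega, ?_⟩
        have he : ((l + 1 + τ : ℕ) : Polynomial (Polynomial k)) * W l
            = (((l : Polynomial (Polynomial k)) + 1 + (τ : Polynomial (Polynomial k))) * W l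
              + (ρ : Polynomial (Polynomial k)) * (yToXY ts * Polynomial.derivative Ts))
              - (ρ : Polynomial (Polynomial k)) * (yToXY ts * Polynomial.derivative Ts) := by
          push_cast; ring
        rw [he]
        exact dvd_sub hVl (((hcase.mul_right _).mul_left _))
      · have hDQs2 : Polynomial.derivative Qs = Polynomial.derivative (yToXY ts) * Ts
            + yToXY ts * Polynomial.derivative Ts := by
          rw [hsplit, Polynomial.derivative_mul]
        have hV3 : p₀ ∣ yToXY ts * Polynomial.derivative Ts - W l := by
          have he : yToXY ts * Polynomial.derivative Ts - W l
              = (∑ i ∈ (Finset.range m).erase l, W i)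
                - Polynomial.derivative (yToXY ts) * Ts := by
            linear_combination hDQs - hDQs2 + hsplit2
          rw [he]
          exact dvd_sub hS2 ((hcase.mul_left _))
        refine ⟨l + 1 + τ + ρ, by omega, ?_⟩
        have he : ((l + 1 + τ + ρ : ℕ) : Polynomial (Polynomial k)) * W l
            = (((l : Polynomial (Polynomial k)) + 1 + (τ : Polynomial (Polynomial k))) * W l
              + (ρ : Polynomial (Polynomial k)) * (yToXY ts * Polynomial.derivative Ts))
              - (ρ : Polynomial (Polynomial k)) * (yToXY ts * Polynomial.derivative Ts - W l) := by
          push_cast; ring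
        rw [he]
        exact dvd_sub hVl (hV3.mul_left _)
    obtain ⟨nn, hnn, hdvd⟩ := hkey
    rcases hp.dvd_or_dvd hdvd with h | h
    · exact hp.not_unit (isUnit_of_dvd_unit h (natCast_isUnit hnn))
    · exact hWl h
end
end

section
/- Under Hypothesis (H), write Q = t(y)·T(x,y) with t in k[y] the content and T the primitive part of Q with respect to x; let t* and T* be the squarefree parts of t and T with respect to y (so that Q* = t*·T*). For each natural number i let N_i in k[x,y] be defined by D_x^i(f) = N_i/(Q·(T*)^i) where f = P/Q, and set H = −D_y(Q)/Q^- − ρ·t*·D_y(T*) for a fixed ρ in ℕ. If u in k(x)[y] and η_0, …, η_ρ in k(x) satisfy Σ_{i=0}^{ρ} η_i·N_i·(T*)^{ρ−i} = Q*·D_y(u) + (D_y(Q*) + H)·u, then deg_y(u) ≤ d_y^- + ρ·deg_y(T*). -/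
open Polynomial

noncomputable section

namespace Stmt14Aux

lemma coeff_derivX {k : Type*} [Field k] (A : Polynomial (Polynomial k)) (n : ℕ) :
    (derivX A).coeff n = Polynomial.derivative (A.coeff n) := by
  rw [derivX, Polynomial.sum]
  simp only [Polynomial.finset_sum_coeff, Polynomial.coeff_C_mul, Polynomial.coeff_X_pow,
    mul_ite, mul_one, mul_zero]
  simp only [eq_comm (a := n)]
  rw [Finset.sum_ite_eq' A.support n (fun i => Polynomial.derivative (A.coeff i))]
  split_ifs with h
  · rfl
  · rw [Polynomial.notMem_support_iff.mp h, map_zero]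

lemma degree_derivX_le {k : Type*} [Field k] (A : Polynomial (Polynomial k)) :
    (derivX A).degree ≤ A.degree := by
  rw [Polynomial.degree_le_iff_coeff_zero]
  intro m hm
  rw [coeff_derivX, Polynomial.coeff_eq_zero_of_degree_lt hm, map_zero]

lemma isDeriv_div {F : Type*} [Field F] {D : F → F} (h : IsDeriv D) (a b : F) (hb : b ≠ 0) :
    D (a / b) = (D a * b - a * D b) / b ^ 2 := by
  have h2 : D a = a / b * D b + b * D (a / b) := by
    conv_lhs => rw [← div_mul_cancel₀ a hb]
    exact h.2 _ _
  rw [eq_div_iff (pow_ne_zero 2 hb)]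
  have h3 : b * D (a / b) = D a - a / b * D b := by rw [h2]; ring
  calc D (a / b) * b ^ 2 = b * D (a / b) * b := by ring
    _ = (D a - a / b * D b) * b := by rw [h3]
    _ = D a * b - a / b * b * D b := by ring
    _ = D a * b - a * D b := by rw [div_mul_cancel₀ a hb]

lemma toF_injective {k : Type*} [Field k] : Function.Injective (toF (k := k)) := by
  rw [toF, RingHom.coe_comp, Polynomial.coe_mapRingHom]
  exact (RatFunc.algebraMap_injective (RatFunc k)).comp
    (Polynomial.map_injective _ (RatFunc.algebraMap_injective k))

lemma toF_ne_zero {k : Type*} [Field k] {A : Polynomial (Polynomial k)} (hA : A ≠ 0) :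
    toF A ≠ 0 := fun h => hA (toF_injective (by simpa using h))

lemma Nseq_degree_lt {k : Type*} [Field k] (P Q Ts : Polynomial (Polynomial k))
    (hQ : Q ≠ 0) (hTs : Ts ≠ 0) (hPQdeg : P.degree < Q.degree)
    (Dx : RatFunc (RatFunc k) → RatFunc (RatFunc k)) (hDx : IsDeriv Dx)
    (hDxval : ∀ A : Polynomial (Polynomial k), Dx (toF A) = toF (derivX A))
    (Nseq : ℕ → Polynomial (Polynomial k))
    (hNseq : ∀ i : ℕ, Dx^[i] (toF P / toF Q) = toF (Nseq i) / (toF Q * toF Ts ^ i)) :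
    ∀ i, (Nseq i).degree < ((Q.natDegree + i * Ts.natDegree : ℕ) : WithBot ℕ) := by
  have hQF : toF Q ≠ 0 := toF_ne_zero hQ
  intro i
  induction i with
  | zero =>
    have h0 := hNseq 0
    simp only [Function.iterate_zero, id_eq, pow_zero, mul_one] at h0
    have h1 : toF P = toF (Nseq 0) := by
      have := congrArg (· * toF Q) h0
      simpa [div_mul_cancel₀, hQF] using this
    have h2 : Nseq 0 = P := (toF_injective h1).symm
    rw [h2]
    simpa [Polynomial.degree_eq_natDegree hQ] using hPQdeg
  | succ i ih =>
    set Di : Polynomial (Polynomial k) := Q * Ts ^ i with hDi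
    have hDine : Di ≠ 0 := mul_ne_zero hQ (pow_ne_zero _ hTs)
    have hDiF : toF Di ≠ 0 := toF_ne_zero hDine
    set M : Polynomial (Polynomial k) :=
      derivX (Nseq i) * Di - Nseq i * derivX Di with hM
    have hD1ne : (Q * Ts ^ (i + 1)) ≠ 0 := mul_ne_zero hQ (pow_ne_zero _ hTs)
    have key : toF (Nseq (i + 1)) / toF (Q * Ts ^ (i + 1)) = toF M / toF (Di ^ 2) := by
      rw [map_mul, map_pow, ← hNseq (i + 1), Function.iterate_succ_apply', hNseq i]
      have hq : toF Q * toF Ts ^ i = toF Di := by rw [hDi, map_mul, map_pow]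
      rw [hq, isDeriv_div hDx _ _ hDiF, hDxval, hDxval, ← map_mul, ← map_mul, ← map_sub,
        ← map_pow]
    have polyeq : Nseq (i + 1) * Di ^ 2 = M * (Q * Ts ^ (i + 1)) := by
      apply toF_injective
      rw [map_mul, map_mul]
      exact (div_eq_div_iff (toF_ne_zero hD1ne) (toF_ne_zero (pow_ne_zero 2 hDine))).mp key
    set c0 : ℕ := Q.natDegree + i * Ts.natDegree with hc0
    set c1 : ℕ := Q.natDegree + (i + 1) * Ts.natDegree with hc1
    have hdDi : Di.degree = (c0 : WithBot ℕ) := by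
      rw [Polynomial.degree_eq_natDegree hDine, hDi, Polynomial.natDegree_mul hQ
        (pow_ne_zero _ hTs), Polynomial.natDegree_pow]
    have hdDi2 : (Di ^ 2).degree = ((c0 + c0 : ℕ) : WithBot ℕ) := by
      rw [Polynomial.degree_eq_natDegree (pow_ne_zero 2 hDine), Polynomial.natDegree_pow,
        Polynomial.natDegree_mul hQ (pow_ne_zero _ hTs), Polynomial.natDegree_pow, hc0]
      push_cast
      ring_nf
    have hdD1 : (Q * Ts ^ (i + 1)).degree = (c1 : WithBot ℕ) := by
      rw [Polynomial.degree_eq_natDegree hD1ne, Polynomial.natDegree_mul hQ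
        (pow_ne_zero _ hTs), Polynomial.natDegree_pow]
    have hMdeg : M.degree < ((c0 + c0 : ℕ) : WithBot ℕ) := by
      have b1 : (derivX (Nseq i) * Di).degree < ((c0 + c0 : ℕ) : WithBot ℕ) := by
        refine (Polynomial.degree_mul_le _ _).trans_lt ?_
        rw [hdDi, Nat.cast_add]
        exact WithBot.add_lt_add_right (WithBot.coe_ne_bot)
          ((degree_derivX_le _).trans_lt ih)
      have b2 : (Nseq i * derivX Di).degree < ((c0 + c0 : ℕ) : WithBot ℕ) := by
        refine (Polynomial.degree_mul_le _ _).trans_lt ?_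
        rw [Nat.cast_add]
        calc (Nseq i).degree + (derivX Di).degree
            ≤ (Nseq i).degree + (c0 : WithBot ℕ) := by
              exact add_le_add le_rfl ((degree_derivX_le _).trans hdDi.le)
          _ < (c0 : WithBot ℕ) + (c0 : WithBot ℕ) :=
              WithBot.add_lt_add_right WithBot.coe_ne_bot ih
      exact (Polynomial.degree_sub_le _ _).trans_lt (max_lt b1 b2)
    have hdeq : (Nseq (i + 1)).degree + ((c0 + c0 : ℕ) : WithBot ℕ) =
        M.degree + (c1 : WithBot ℕ) := by
      have := congrArg Polynomial.degree polyeq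
      rwa [Polynomial.degree_mul, Polynomial.degree_mul, hdDi2, hdD1] at this
    have hlt : (Nseq (i + 1)).degree + ((c0 + c0 : ℕ) : WithBot ℕ) <
        (c1 : WithBot ℕ) + ((c0 + c0 : ℕ) : WithBot ℕ) := by
      rw [hdeq]
      calc M.degree + (c1 : WithBot ℕ) < ((c0 + c0 : ℕ) : WithBot ℕ) + (c1 : WithBot ℕ) :=
            WithBot.add_lt_add_right WithBot.coe_ne_bot hMdeg
        _ = (c1 : WithBot ℕ) + ((c0 + c0 : ℕ) : WithBot ℕ) := by rw [add_comm]
    exact lt_of_add_lt_add_right hlt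

end Stmt14Aux

/-- Lemma `le:degb`. Under Hypothesis (H) and with the notation of the
Almkvist–Zeilberger parameterisation (`Q = t·T`, `Q* = t*·T*`, `Nᵢ` the numerators of the
derivatives, `H = −D_y(Q)/Q⁻ − ρ·t*·D_y(T*)`): any polynomial solution `u ∈ k(x)[y]` of
`∑ ηᵢ·Nᵢ·(T*)^{ρ−i} = Q*·D_y(u) + (D_y(Q*) + H)·u` satisfies
`deg_y(u) ≤ d_y⁻ + ρ·deg_y(T*)`. -/
theorem stmt_14 {k : Type*} [Field k] [CharZero k]
    (P Q : Polynomial (Polynomial k))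
    (hP : P ≠ 0) (hQ : Q ≠ 0)
    (hPQdeg : P.degree < Q.degree)
    (hPQcop : IsRelPrime P Q)
    (hQprimY : Q.IsPrimitive)
    (m : ℕ) (hm : 0 < m) (q : Polynomial k) (Qi : ℕ → Polynomial (Polynomial k))
    (hfac : Q = Polynomial.C q * ∏ i ∈ Finset.range m, Qi i ^ (i + 1))
    (hQiprim : ∀ i < m, (Qi i).IsPrimitive)
    (hQisqf : ∀ i < m, Squarefree (Qi i))
    (hQicop : ∀ i < m, ∀ j < m, i ≠ j → IsRelPrime (Qi i) (Qi j))
    (hQim : 0 < (Qi (m - 1)).natDegree)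
    (Qs Qneg : Polynomial (Polynomial k))
    (hQs : Qs = ∏ i ∈ Finset.range m, Qi i)
    (hQneg : Q = Qs * Qneg)
    (Dy : RatFunc (RatFunc k) → RatFunc (RatFunc k)) (hDy : IsDeriv Dy)
    (hDyval : ∀ A : Polynomial (RatFunc k), Dy (kyToF A) = kyToF (Polynomial.derivative A))
    (Dx : RatFunc (RatFunc k) → RatFunc (RatFunc k)) (hDx : IsDeriv Dx)
    (hDxval : ∀ A : Polynomial (Polynomial k), Dx (toF A) = toF (derivX A))
    (t : Polynomial k) (T : Polynomial (Polynomial k))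
    (hQtT : Q = yToXY t * T)
    (hTprim : ∀ s : Polynomial k, yToXY s ∣ T → IsUnit s)
    (ts : Polynomial k) (Ts : Polynomial (Polynomial k))
    (hts : ts ∣ t) (hTs : Ts ∣ T)
    (hsplit : Qs = yToXY ts * Ts)
    (Nseq : ℕ → Polynomial (Polynomial k))
    (hNseq : ∀ i : ℕ, Dx^[i] (toF P / toF Q) = toF (Nseq i) / (toF Q * toF Ts ^ i))
    (ρ : ℕ) (η : Fin (ρ + 1) → RatFunc k)
    (Hp : Polynomial (Polynomial k))
    (hHp : Hp * Qneg =
      -Polynomial.derivative Q - (ρ • (yToXY ts * Polynomial.derivative Ts)) * Qneg)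
    (u : Polynomial (RatFunc k))
    (hu : ∑ i : Fin (ρ + 1),
        Polynomial.C (η i) * toKy (Nseq (i : ℕ) * Ts ^ (ρ - (i : ℕ))) =
      toKy Qs * Polynomial.derivative u +
        (Polynomial.derivative (toKy Qs) + toKy Hp) * u) :
    u.natDegree ≤ Qneg.natDegree + ρ * Ts.natDegree := by
  classical
  letI : CharZero (RatFunc k) := charZero_of_injective_ringHom (RatFunc.algebraMap_injective k)
  have φinj : Function.Injective (algebraMap (Polynomial k) (RatFunc k)) :=
    RatFunc.algebraMap_injective k
  -- rewrite the ℕ-smul in hHp as multiplication by a constant polynomial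
  rw [smul_mul_assoc, nsmul_eq_mul, ← Polynomial.C_eq_natCast,
    ← mul_assoc (Polynomial.C ((ρ : Polynomial k)))] at hHp
  -- nonzeroness
  have hQs0 : Qs ≠ 0 := fun h => hQ (by rw [hQneg, h, zero_mul])
  have hQneg0 : Qneg ≠ 0 := fun h => hQ (by rw [hQneg, h, mul_zero])
  have hA0 : yToXY ts ≠ 0 := fun h => hQs0 (by rw [hsplit, h, zero_mul])
  have hTs0 : Ts ≠ 0 := fun h => hQs0 (by rw [hsplit, h, mul_zero])
  have hsd : Q.natDegree = Qs.natDegree + Qneg.natDegree := by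
    rw [hQneg, Polynomial.natDegree_mul hQs0 hQneg0]
  have hab : Qs.natDegree = (yToXY ts).natDegree + Ts.natDegree := by
    rw [hsplit, Polynomial.natDegree_mul hA0 hTs0]
  -- s ≥ 1
  have hQi0 : ∀ i < m, Qi i ≠ 0 := by
    intro i hi h
    exact not_isUnit_zero (hQiprim i hi (0 : Polynomial k) (by simp [h]))
  have hs1 : 1 ≤ Qs.natDegree := by
    have hprod : Qs.natDegree = ∑ i ∈ Finset.range m, (Qi i).natDegree := by
      rw [hQs, Polynomial.natDegree_prod _ _ fun i hi => hQi0 i (Finset.mem_range.mp hi)]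
    have hmem : m - 1 ∈ Finset.range m := Finset.mem_range.mpr (by omega)
    have h2 : (Qi (m - 1)).natDegree ≤ ∑ i ∈ Finset.range m, (Qi i).natDegree :=
      Finset.single_le_sum (f := fun i => (Qi i).natDegree) (fun i _ => Nat.zero_le _) hmem
    omega
  -- degree bound on the Nseq
  have hNdeg := Stmt14Aux.Nseq_degree_lt P Q Ts hQ hTs0 hPQdeg Dx hDx hDxval Nseq hNseq
  -- derivative of Ts facts
  have hTs'deg : (Polynomial.derivative Ts).natDegree ≤ Ts.natDegree - 1 :=
    Polynomial.natDegree_derivative_le Ts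
  have hATs'deg : (yToXY ts * Polynomial.derivative Ts).natDegree ≤ Qs.natDegree - 1 := by
    rcases Nat.eq_zero_or_pos Ts.natDegree with hb0 | hb1
    · obtain ⟨c, hc⟩ := Polynomial.natDegree_eq_zero.mp hb0
      rw [← hc, Polynomial.derivative_C, mul_zero, Polynomial.natDegree_zero]
      omega
    · refine (Polynomial.natDegree_mul_le).trans ?_
      omega
  -- degree bound on Hp
  have hHpdeg : Hp.natDegree ≤ Qs.natDegree - 1 := by
    have hR : (-Polynomial.derivative Q -
        Polynomial.C ((ρ : Polynomial k)) * (yToXY ts * Polynomial.derivative Ts)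
          * Qneg).natDegree ≤ Qs.natDegree + Qneg.natDegree - 1 := by
      refine (Polynomial.natDegree_sub_le _ _).trans ?_
      have r1 : (-Polynomial.derivative Q).natDegree ≤ Qs.natDegree + Qneg.natDegree - 1 := by
        rw [Polynomial.natDegree_neg]
        have := Polynomial.natDegree_derivative_le Q
        omega
      have r2 : (Polynomial.C ((ρ : Polynomial k)) * (yToXY ts * Polynomial.derivative Ts)
          * Qneg).natDegree ≤ Qs.natDegree + Qneg.natDegree - 1 := by
        refine (Polynomial.natDegree_mul_le).trans ?_
        have r3 : (Polynomial.C ((ρ : Polynomial k))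
            * (yToXY ts * Polynomial.derivative Ts)).natDegree ≤ Qs.natDegree - 1 := by
          refine (Polynomial.natDegree_mul_le).trans ?_
          simp only [Polynomial.natDegree_C]
          omega
        omega
      omega
    rcases eq_or_ne Hp 0 with h0 | h0
    · rw [h0, Polynomial.natDegree_zero]; omega
    · have := congrArg Polynomial.natDegree hHp
      rw [Polynomial.natDegree_mul h0 hQneg0] at this
      omega
  -- leading coefficient bits
  have hlcQ : Q.leadingCoeff = Qs.leadingCoeff * Qneg.leadingCoeff := by
    rw [hQneg, Polynomial.leadingCoeff_mul]
  have hlcQs : Qs.leadingCoeff = (yToXY ts).leadingCoeff * Ts.leadingCoeff := by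
    rw [hsplit, Polynomial.leadingCoeff_mul]
  -- coefficient of A * Ts' at s - 1
  have hATs'c : (yToXY ts * Polynomial.derivative Ts).coeff (Qs.natDegree - 1)
      = (Ts.natDegree : Polynomial k) * Qs.leadingCoeff := by
    rcases Nat.eq_zero_or_pos Ts.natDegree with hb0 | hb1
    · obtain ⟨c, hc⟩ := Polynomial.natDegree_eq_zero.mp hb0
      rw [← hc, Polynomial.derivative_C, mul_zero, Polynomial.coeff_zero,
        Polynomial.natDegree_C, Nat.cast_zero, zero_mul]
    · have hidx : Qs.natDegree - 1 = (yToXY ts).natDegree + (Ts.natDegree - 1) := by omega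
      rw [hidx, Polynomial.coeff_mul_add_eq_of_natDegree_le le_rfl hTs'deg,
        Polynomial.coeff_derivative]
      have hbidx : Ts.natDegree - 1 + 1 = Ts.natDegree := by omega
      have hbc : ((Ts.natDegree - 1 : ℕ) : Polynomial k) + 1
          = ((Ts.natDegree : ℕ) : Polynomial k) := by
        rw [← Nat.cast_one (R := Polynomial k), ← Nat.cast_add]
        exact congrArg _ (by omega)
      rw [hbidx, hbc, Polynomial.coeff_natDegree, Polynomial.coeff_natDegree, hlcQs]
      ring
  -- coefficient of Hp at s - 1
  have hHpc : Hp.coeff (Qs.natDegree - 1)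
      = (-((Qs.natDegree + Qneg.natDegree : ℕ) : Polynomial k)
          - (ρ : Polynomial k) * (Ts.natDegree : Polynomial k))
        * Qs.leadingCoeff := by
    have ce : (Hp * Qneg).coeff (Qs.natDegree - 1 + Qneg.natDegree)
        = (-Polynomial.derivative Q -
        Polynomial.C ((ρ : Polynomial k)) * (yToXY ts * Polynomial.derivative Ts)
          * Qneg).coeff (Qs.natDegree - 1 + Qneg.natDegree) := by rw [hHp]
    rw [Polynomial.coeff_mul_add_eq_of_natDegree_le hHpdeg le_rfl] at ce
    rw [Polynomial.coeff_sub, Polynomial.coeff_neg, Polynomial.coeff_derivative] at ce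
    have hidx : Qs.natDegree - 1 + Qneg.natDegree + 1 = Qs.natDegree + Qneg.natDegree := by
      omega
    rw [hidx] at ce
    have hce2 : ((Qs.natDegree - 1 + Qneg.natDegree : ℕ) : Polynomial k) + 1
        = ((Qs.natDegree + Qneg.natDegree : ℕ) : Polynomial k) := by
      rw [← Nat.cast_one (R := Polynomial k), ← Nat.cast_add]
      exact congrArg _ (by omega)
    rw [hce2] at ce
    have hQtop : Q.coeff (Qs.natDegree + Qneg.natDegree) =
        Qs.leadingCoeff * Qneg.leadingCoeff := by
      rw [← hsd, Polynomial.coeff_natDegree, hlcQ]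
    rw [hQtop, mul_assoc (Polynomial.C ((ρ : Polynomial k))), Polynomial.coeff_C_mul,
      Polynomial.coeff_mul_add_eq_of_natDegree_le hATs'deg le_rfl, hATs'c,
      Polynomial.coeff_natDegree] at ce
    apply mul_right_cancel₀ (Polynomial.leadingCoeff_ne_zero.mpr hQneg0)
    rw [ce]
    push_cast
    ring
  -- main contradiction argument
  by_contra hcon
  push_neg at hcon
  have hu0 : u ≠ 0 := by
    intro h
    rw [h, Polynomial.natDegree_zero] at hcon
    omega
  have hn1 : 1 ≤ u.natDegree := by omega
  have hlcu : u.coeff u.natDegree ≠ 0 := by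
    rw [Polynomial.coeff_natDegree]; exact Polynomial.leadingCoeff_ne_zero.mpr hu0
  have ceq : (∑ i : Fin (ρ + 1),
      Polynomial.C (η i) * toKy (Nseq (i : ℕ) * Ts ^ (ρ - (i : ℕ)))).coeff
        (Qs.natDegree - 1 + u.natDegree)
      = (toKy Qs * Polynomial.derivative u).coeff (Qs.natDegree - 1 + u.natDegree)
        + ((Polynomial.derivative (toKy Qs) + toKy Hp) * u).coeff
            (Qs.natDegree - 1 + u.natDegree) := by
    rw [hu, Polynomial.coeff_add]
  -- natDegree of mapped polynomials
  have hmapdeg : ∀ p : Polynomial (Polynomial k), (toKy p).natDegree = p.natDegree := by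
    intro p
    rw [toKy, Polynomial.coe_mapRingHom]
    exact Polynomial.natDegree_map_eq_of_injective φinj p
  have hmapcoeff : ∀ (p : Polynomial (Polynomial k)) (j : ℕ),
      (toKy p).coeff j = algebraMap (Polynomial k) (RatFunc k) (p.coeff j) := by
    intro p j
    rw [toKy, Polynomial.coe_mapRingHom, Polynomial.coeff_map]
  -- LHS coefficient is zero
  have hlhs : (∑ i : Fin (ρ + 1),
      Polynomial.C (η i) * toKy (Nseq (i : ℕ) * Ts ^ (ρ - (i : ℕ)))).coeff
        (Qs.natDegree - 1 + u.natDegree) = 0 := by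
    rw [Polynomial.finset_sum_coeff]
    refine Finset.sum_eq_zero fun i _ => ?_
    rw [Polynomial.coeff_C_mul]
    rcases eq_or_ne (Nseq (i : ℕ)) 0 with h0 | h0
    · rw [h0, zero_mul, map_zero, Polynomial.coeff_zero, mul_zero]
    · have hi1 : (i : ℕ) ≤ ρ := by omega
      have hNideg : (Nseq (i : ℕ)).natDegree < Q.natDegree + (i : ℕ) * Ts.natDegree :=
        (Polynomial.natDegree_lt_iff_degree_lt h0).mpr (hNdeg (i : ℕ))
      have hdegterm : (Nseq (i : ℕ) * Ts ^ (ρ - (i : ℕ))).natDegree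
          < Qs.natDegree - 1 + u.natDegree := by
        refine (Polynomial.natDegree_mul_le).trans_lt ?_
        rw [Polynomial.natDegree_pow]
        have hsum : (i : ℕ) * Ts.natDegree + (ρ - (i : ℕ)) * Ts.natDegree
            = ρ * Ts.natDegree := by
          rw [← add_mul]; congr 1; omega
        omega
      rw [(Polynomial.coeff_eq_zero_of_natDegree_lt (by rw [hmapdeg]; exact hdegterm)),
        mul_zero]
  rw [hlhs] at ceq
  -- RHS coefficient computation
  have hc1 : (toKy Qs * Polynomial.derivative u).coeff (Qs.natDegree - 1 + u.natDegree)
      = algebraMap (Polynomial k) (RatFunc k) Qs.leadingCoeff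
          * (u.coeff u.natDegree * ((u.natDegree : ℕ) : RatFunc k)) := by
    have hN1 : Qs.natDegree - 1 + u.natDegree = Qs.natDegree + (u.natDegree - 1) := by omega
    rw [hN1, Polynomial.coeff_mul_add_eq_of_natDegree_le (le_of_eq (hmapdeg Qs))
      ((Polynomial.natDegree_derivative_le u).trans (by omega)),
      Polynomial.coeff_derivative, hmapcoeff]
    have h1 : u.natDegree - 1 + 1 = u.natDegree := by omega
    have h2 : ((u.natDegree - 1 : ℕ) : RatFunc k) + 1
        = ((u.natDegree : ℕ) : RatFunc k) := by
      rw [← Nat.cast_one (R := RatFunc k), ← Nat.cast_add]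
      exact congrArg _ (by omega)
    rw [h1, h2, Polynomial.coeff_natDegree, Polynomial.coeff_natDegree]
  have hc2 : ((Polynomial.derivative (toKy Qs) + toKy Hp) * u).coeff
        (Qs.natDegree - 1 + u.natDegree)
      = (algebraMap (Polynomial k) (RatFunc k) Qs.leadingCoeff
            * ((Qs.natDegree : ℕ) : RatFunc k)
        + (-((Qs.natDegree + Qneg.natDegree : ℕ) : RatFunc k)
            - ((ρ : ℕ) : RatFunc k) * ((Ts.natDegree : ℕ) : RatFunc k))
          * algebraMap (Polynomial k) (RatFunc k) Qs.leadingCoeff)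
        * u.coeff u.natDegree := by
    have hsumdeg : (Polynomial.derivative (toKy Qs) + toKy Hp).natDegree
        ≤ Qs.natDegree - 1 := by
      refine (Polynomial.natDegree_add_le _ _).trans ?_
      have e1 : (Polynomial.derivative (toKy Qs)).natDegree ≤ Qs.natDegree - 1 := by
        have := Polynomial.natDegree_derivative_le (toKy Qs)
        rw [hmapdeg] at this
        omega
      have e2 : (toKy Hp).natDegree ≤ Qs.natDegree - 1 := by rw [hmapdeg]; exact hHpdeg
      omega
    rw [Polynomial.coeff_mul_add_eq_of_natDegree_le hsumdeg le_rfl]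
    congr 1
    rw [Polynomial.coeff_add, Polynomial.coeff_derivative, hmapcoeff, hmapcoeff]
    have h1 : Qs.natDegree - 1 + 1 = Qs.natDegree := by omega
    have h2 : ((Qs.natDegree - 1 : ℕ) : RatFunc k) + 1
        = ((Qs.natDegree : ℕ) : RatFunc k) := by
      rw [← Nat.cast_one (R := RatFunc k), ← Nat.cast_add]
      exact congrArg _ (by omega)
    rw [h1, h2, Polynomial.coeff_natDegree, hHpc]
    rw [map_mul, map_sub, map_neg, map_natCast, map_mul, map_natCast, map_natCast]
  rw [hc1, hc2] at ceq
  -- conclude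
  have hfactor : algebraMap (Polynomial k) (RatFunc k) Qs.leadingCoeff * u.coeff u.natDegree
      * (((u.natDegree : ℕ) : RatFunc k) + ((Qs.natDegree : ℕ) : RatFunc k)
        - ((Qs.natDegree + Qneg.natDegree : ℕ) : RatFunc k)
        - ((ρ : ℕ) : RatFunc k) * ((Ts.natDegree : ℕ) : RatFunc k)) = 0 := by
    linear_combination -ceq
  have hcne : algebraMap (Polynomial k) (RatFunc k) Qs.leadingCoeff * u.coeff u.natDegree
      ≠ 0 :=
    mul_ne_zero (fun h => Polynomial.leadingCoeff_ne_zero.mpr hQs0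
      (φinj (by rw [h, map_zero]))) hlcu
  have hzero : ((u.natDegree : ℕ) : RatFunc k) + ((Qs.natDegree : ℕ) : RatFunc k)
      - ((Qs.natDegree + Qneg.natDegree : ℕ) : RatFunc k)
      - ((ρ : ℕ) : RatFunc k) * ((Ts.natDegree : ℕ) : RatFunc k) = 0 := by
    rcases mul_eq_zero.mp hfactor with h | h
    · exact absurd h hcne
    · exact h
  have hcast : ((u.natDegree : ℕ) : RatFunc k)
      = ((Qneg.natDegree + ρ * Ts.natDegree : ℕ) : RatFunc k) := by
    push_cast
    push_cast at hzero
    linear_combination hzero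
  have hfin : u.natDegree = Qneg.natDegree + ρ * Ts.natDegree := Nat.cast_injective hcast
  omega
end
end

section
/- Let f = P/Q be a nonzero rational function in k(x,y) with P, Q in k[x,y], Q ≠ 0, deg_x(P) ≤ d_x, deg_x(Q) ≤ d_x, deg_y(P) ≤ d_y, deg_y(Q) ≤ d_y. Set ν = 6·(d_x+1)·(d_y+1). Then there exists a family (c_{i,j,ℓ}) of elements of k, indexed by triples (i,j,ℓ) of natural numbers with i + j + ℓ ≤ ν and not all zero, such that Σ_{i+j+ℓ ≤ ν} c_{i,j,ℓ}·x^i·D_x^j(D_y^ℓ(f)) = 0 in k(x,y). -/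
open Polynomial

noncomputable section

namespace S17
variable {k : Type*} [Field k]

variable {k : Type*} [Field k]

lemma degX_le_iff {A : Polynomial (Polynomial k)} {d : ℕ} :
    degX A ≤ d ↔ ∀ i, (A.coeff i).natDegree ≤ d := by
  constructor
  · intro h i
    by_cases hi : i ∈ A.support
    · exact le_trans (Finset.le_sup (f := fun i => (A.coeff i).natDegree) hi) h
    · simp [Polynomial.notMem_support_iff.mp hi]
  · intro h; exact Finset.sup_le fun i _ => h i

lemma coeff_deg (A : Polynomial (Polynomial k)) (i : ℕ) : (A.coeff i).natDegree ≤ degX A :=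
  degX_le_iff.mp le_rfl i

lemma degX_mul_le (A B : Polynomial (Polynomial k)) : degX (A * B) ≤ degX A + degX B := by
  rw [degX_le_iff]
  intro n
  rw [Polynomial.coeff_mul]
  apply Polynomial.natDegree_sum_le_of_forall_le
  intro p _
  exact (Polynomial.natDegree_mul_le).trans (add_le_add (coeff_deg A p.1) (coeff_deg B p.2))

lemma degX_sub_le (A B : Polynomial (Polynomial k)) : degX (A - B) ≤ max (degX A) (degX B) := by
  rw [degX_le_iff]
  intro n
  rw [Polynomial.coeff_sub]
  exact (Polynomial.natDegree_sub_le _ _).trans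
    (max_le_max (coeff_deg A n) (coeff_deg B n))

lemma degX_pow_le (A : Polynomial (Polynomial k)) (m : ℕ) : degX (A ^ m) ≤ m * degX A := by
  induction m with
  | zero =>
      rw [pow_zero, Nat.zero_mul]
      rw [degX_le_iff]
      intro i
      rw [Polynomial.coeff_one]
      split <;> simp
  | succ m ih =>
      rw [pow_succ]
      exact (degX_mul_le _ _).trans (by rw [add_mul, one_mul]; exact Nat.add_le_add_right ih _)

lemma degX_natCast_le (m : ℕ) : degX ((m : Polynomial (Polynomial k))) ≤ 0 := by
  rw [degX_le_iff]
  intro i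
  rw [Polynomial.coeff_natCast_ite]
  split <;> simp

lemma degX_C_le (p : Polynomial k) : degX (Polynomial.C p) ≤ p.natDegree := by
  rw [degX_le_iff]
  intro i
  rw [Polynomial.coeff_C]
  split <;> simp

lemma degX_derivative_le (A : Polynomial (Polynomial k)) :
    degX (Polynomial.derivative A) ≤ degX A := by
  rw [degX_le_iff]
  intro n
  rw [Polynomial.coeff_derivative]
  refine Polynomial.natDegree_mul_le.trans ?_
  have h1 : ((n : Polynomial k) + 1).natDegree = 0 := by
    have : ((n : Polynomial k) + 1) = ((n + 1 : ℕ) : Polynomial k) := by push_cast; ring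
    rw [this, Polynomial.natDegree_natCast]
  rw [h1, add_zero]
  exact coeff_deg A (n + 1)

lemma coeff_derivX (A : Polynomial (Polynomial k)) (n : ℕ) :
    (derivX A).coeff n = Polynomial.derivative (A.coeff n) := by
  unfold derivX
  rw [Polynomial.sum, Polynomial.finset_sum_coeff]
  simp only [Polynomial.coeff_C_mul, Polynomial.coeff_X_pow, mul_ite, mul_one, mul_zero]
  rw [Finset.sum_ite_eq A.support n (fun i => Polynomial.derivative (A.coeff i))]
  split
  · rfl
  · next h => rw [Polynomial.notMem_support_iff.mp h, map_zero]

lemma degX_derivX_le (A : Polynomial (Polynomial k)) : degX (derivX A) ≤ degX A := by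
  rw [degX_le_iff]
  intro n
  rw [coeff_derivX]
  exact (Polynomial.natDegree_derivative_le _).trans ((Nat.sub_le _ _).trans (coeff_deg A n))

lemma natDegree_derivX_le (A : Polynomial (Polynomial k)) : (derivX A).natDegree ≤ A.natDegree := by
  rw [Polynomial.natDegree_le_iff_coeff_eq_zero]
  intro m hm
  rw [coeff_derivX, Polynomial.coeff_eq_zero_of_natDegree_lt hm, map_zero]

lemma isDeriv_pow {F : Type*} [CommRing F] {D : F → F} (hD : IsDeriv D) (u : F) :
    ∀ m : ℕ, D (u ^ (m + 1)) = ((m + 1 : ℕ) : F) * u ^ m * D u := by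
  intro m
  induction m with
  | zero => simp
  | succ m ih =>
      have : u ^ (m + 2) = u ^ (m + 1) * u := by ring
      rw [this, hD.2, ih]
      push_cast
      ring

lemma deriv_div {F : Type*} [Field F] {D : F → F} (hD : IsDeriv D) (u v : F) (hv : v ≠ 0) :
    D (u / v) = (D u - u / v * D v) / v := by
  have h1 : u / v * v = u := div_mul_cancel₀ u hv
  have h2 := hD.2 (u / v) v
  rw [h1] at h2
  rw [eq_div_iff hv]
  linear_combination -h2

lemma toF_injective : Function.Injective (⇑(toF (k := k))) := by
  have h1 : Function.Injective (algebraMap (Polynomial (RatFunc k)) (RatFunc (RatFunc k))) :=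
    RatFunc.algebraMap_injective (RatFunc k)
  have h2 : Function.Injective
      (⇑(Polynomial.mapRingHom (algebraMap (Polynomial k) (RatFunc k)))) := by
    simpa [Polynomial.coe_mapRingHom] using
      Polynomial.map_injective (algebraMap (Polynomial k) (RatFunc k))
        (RatFunc.algebraMap_injective k)
  exact h1.comp h2

lemma toF_ne_zero {A : Polynomial (Polynomial k)} (hA : A ≠ 0) : toF A ≠ 0 := by
  intro h
  exact hA (toF_injective (by rw [h, map_zero]))

lemma rep_step (Q : Polynomial (Polynomial k)) (hQ : toF Q ≠ 0) (dx dy : ℕ)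
    (hQdx : degX Q ≤ dx) (hQdy : Q.natDegree ≤ dy)
    {D : RatFunc (RatFunc k) → RatFunc (RatFunc k)} (hD : IsDeriv D)
    {d : Polynomial (Polynomial k) → Polynomial (Polynomial k)}
    (hDval : ∀ A, D (toF A) = toF (d A))
    (hddx : ∀ A, degX (d A) ≤ degX A) (hddy : ∀ A, (d A).natDegree ≤ A.natDegree)
    (n : ℕ) (A : Polynomial (Polynomial k))
    (hA1 : degX A ≤ (n + 1) * dx) (hA2 : A.natDegree ≤ (n + 1) * dy) :
    ∃ B, degX B ≤ (n + 2) * dx ∧ B.natDegree ≤ (n + 2) * dy ∧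
      D (toF A / toF Q ^ (n + 1)) = toF B / toF Q ^ (n + 2) := by
  refine ⟨d A * Q - ((n + 1 : ℕ) : Polynomial (Polynomial k)) * (A * d Q), ?_, ?_, ?_⟩
  · refine (degX_sub_le _ _).trans (max_le ?_ ?_)
    · calc degX (d A * Q) ≤ degX (d A) + degX Q := degX_mul_le _ _
        _ ≤ (n + 1) * dx + dx := add_le_add ((hddx A).trans hA1) hQdx
        _ = (n + 2) * dx := by ring
    · calc degX (((n + 1 : ℕ) : Polynomial (Polynomial k)) * (A * d Q))
          ≤ degX ((n + 1 : ℕ) : Polynomial (Polynomial k)) + degX (A * d Q) := degX_mul_le _ _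
        _ ≤ 0 + (degX A + degX (d Q)) :=
            add_le_add (degX_natCast_le _) (degX_mul_le _ _)
        _ ≤ 0 + ((n + 1) * dx + dx) :=
            add_le_add le_rfl (add_le_add hA1 ((hddx Q).trans hQdx))
        _ = (n + 2) * dx := by ring
  · refine (Polynomial.natDegree_sub_le _ _).trans (max_le ?_ ?_)
    · calc (d A * Q).natDegree ≤ (d A).natDegree + Q.natDegree := Polynomial.natDegree_mul_le
        _ ≤ (n + 1) * dy + dy := add_le_add ((hddy A).trans hA2) hQdy
        _ = (n + 2) * dy := by ring
    · calc (((n + 1 : ℕ) : Polynomial (Polynomial k)) * (A * d Q)).natDegree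
          ≤ ((n + 1 : ℕ) : Polynomial (Polynomial k)).natDegree + (A * d Q).natDegree :=
            Polynomial.natDegree_mul_le
        _ ≤ 0 + ((A.natDegree) + (d Q).natDegree) := by
            exact add_le_add (le_of_eq (Polynomial.natDegree_natCast _))
              Polynomial.natDegree_mul_le
        _ ≤ 0 + ((n + 1) * dy + dy) :=
            add_le_add le_rfl (add_le_add hA2 ((hddy Q).trans hQdy))
        _ = (n + 2) * dy := by ring
  · have hv : toF Q ^ (n + 1) ≠ 0 := pow_ne_zero _ hQ
    rw [deriv_div hD _ _ hv, hDval A]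
    have hDv : D (toF Q ^ (n + 1)) =
        ((n + 1 : ℕ) : RatFunc (RatFunc k)) * toF Q ^ n * toF (d Q) := by
      rw [isDeriv_pow hD, hDval]
    rw [hDv]
    have hB : toF (d A * Q - ((n + 1 : ℕ) : Polynomial (Polynomial k)) * (A * d Q)) =
        toF (d A) * toF Q - ((n + 1 : ℕ) : RatFunc (RatFunc k)) * (toF A * toF (d Q)) := by
      simp [map_sub, map_mul, map_natCast]
    rw [hB]
    field_simp
    ring

lemma rep_iter (Q : Polynomial (Polynomial k)) (hQ : toF Q ≠ 0) (dx dy : ℕ)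
    (hQdx : degX Q ≤ dx) (hQdy : Q.natDegree ≤ dy)
    {D : RatFunc (RatFunc k) → RatFunc (RatFunc k)} (hD : IsDeriv D)
    {d : Polynomial (Polynomial k) → Polynomial (Polynomial k)}
    (hDval : ∀ A, D (toF A) = toF (d A))
    (hddx : ∀ A, degX (d A) ≤ degX A) (hddy : ∀ A, (d A).natDegree ≤ A.natDegree)
    (j : ℕ) :
    ∀ (n : ℕ) (r : RatFunc (RatFunc k)),
      (∃ A, degX A ≤ (n + 1) * dx ∧ A.natDegree ≤ (n + 1) * dy ∧
        r = toF A / toF Q ^ (n + 1)) →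
      ∃ B, degX B ≤ (n + j + 1) * dx ∧ B.natDegree ≤ (n + j + 1) * dy ∧
        D^[j] r = toF B / toF Q ^ (n + j + 1) := by
  induction j with
  | zero =>
      rintro n r ⟨A, h1, h2, h3⟩
      exact ⟨A, h1, h2, by simpa using h3⟩
  | succ j ih =>
      rintro n r ⟨A, h1, h2, h3⟩
      obtain ⟨B, hB1, hB2, hB3⟩ :=
        rep_step Q hQ dx dy hQdx hQdy hD hDval hddx hddy n A h1 h2
      have hit : D^[j + 1] r = D^[j] (D r) := Function.iterate_succ_apply D j r
      obtain ⟨Cc, hC1, hC2, hC3⟩ := ih (n + 1) (D r)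
        ⟨B, by rwa [show n + 1 + 1 = n + 2 from rfl],
          by rwa [show n + 1 + 1 = n + 2 from rfl],
          by rw [h3]; exact hB3⟩
      have he : n + 1 + j + 1 = n + (j + 1) + 1 := by omega
      rw [he] at hC1 hC2 hC3
      exact ⟨Cc, hC1, hC2, by rw [hit]; exact hC3⟩

lemma algebraMap_eq_toF (c : k) :
    algebraMap k (RatFunc (RatFunc k)) c = toF (Polynomial.C (Polynomial.C c)) := by
  have h1 : toF (Polynomial.C (Polynomial.C c)) =
      algebraMap (Polynomial (RatFunc k)) (RatFunc (RatFunc k))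
        (Polynomial.C (algebraMap (Polynomial k) (RatFunc k) (Polynomial.C c))) := by
    simp [toF, Polynomial.map_C]
  rw [h1, IsScalarTower.algebraMap_apply k (Polynomial (RatFunc k)) (RatFunc (RatFunc k))]
  congr 1

lemma mem_span (Qp : RatFunc (RatFunc k)) (DX DY : ℕ) (g : Polynomial (Polynomial k))
    (h1 : degX g ≤ DX) (h2 : g.natDegree ≤ DY) :
    toF g / Qp ∈ Submodule.span k (Set.range (fun p : Fin (DX + 1) × Fin (DY + 1) =>
      toF (Polynomial.C (Polynomial.X ^ (p.1 : ℕ)) * Polynomial.X ^ (p.2 : ℕ)) / Qp)) := by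
  have hg : g = ∑ b ∈ Finset.range (DY + 1), ∑ a ∈ Finset.range (DX + 1),
      Polynomial.C (Polynomial.C ((g.coeff b).coeff a)) *
        (Polynomial.C (Polynomial.X ^ a) * Polynomial.X ^ b) := by
    conv_lhs => rw [g.as_sum_range' (DY + 1) (Nat.lt_succ_of_le h2)]
    refine Finset.sum_congr rfl fun b _ => ?_
    rw [← Polynomial.C_mul_X_pow_eq_monomial]
    conv_lhs => rw [(g.coeff b).as_sum_range' (DX + 1)
      (Nat.lt_succ_of_le (degX_le_iff.mp h1 b))]
    rw [map_sum, Finset.sum_mul]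
    refine Finset.sum_congr rfl fun a _ => ?_
    rw [← Polynomial.C_mul_X_pow_eq_monomial, map_mul]
    ring
  rw [hg, map_sum, Finset.sum_div]
  refine Submodule.sum_mem _ fun b hb => ?_
  rw [map_sum, Finset.sum_div]
  refine Submodule.sum_mem _ fun a ha => ?_
  rw [map_mul, ← algebraMap_eq_toF, mul_div_assoc, ← Algebra.smul_def]
  refine Submodule.smul_mem _ _ (Submodule.subset_span ?_)
  exact ⟨(⟨a, Finset.mem_range.mp ha⟩, ⟨b, Finset.mem_range.mp hb⟩), rfl⟩

lemma sum_sub_eq (t M : ℕ) (h : t ≤ M) :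
    ∑ j ∈ Finset.range M, (t - j) = ∑ j ∈ Finset.range t, (j + 1) := by
  rw [← Finset.sum_subset (Finset.range_subset_range.mpr h)
    (fun x _ hx => by simp only [Finset.mem_range] at hx ⊢; omega)]
  calc ∑ j ∈ Finset.range t, (t - j) = ∑ j ∈ Finset.range t, (t - 1 - j + 1) :=
        Finset.sum_congr rfl fun j hj => by
          have := Finset.mem_range.mp hj; omega
    _ = ∑ j ∈ Finset.range t, (j + 1) := Finset.sum_range_reflect (fun j => j + 1) t

lemma gauss (t : ℕ) : 2 * ∑ j ∈ Finset.range t, (j + 1) = t * (t + 1) := by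
  induction t with
  | zero => simp
  | succ t ih => rw [Finset.sum_range_succ, Nat.mul_add, ih]; ring

lemma gauss2 (M : ℕ) : 6 * ∑ i ∈ Finset.range M, (∑ j ∈ Finset.range (i + 1), (j + 1)) =
    M * (M + 1) * (M + 2) := by
  induction M with
  | zero => simp
  | succ M ih =>
      rw [Finset.sum_range_succ, Nat.mul_add, ih]
      have h1 := gauss (M + 1)
      calc M * (M + 1) * (M + 2) + 6 * ∑ j ∈ Finset.range (M + 1), (j + 1)
          = M * (M + 1) * (M + 2) + 3 * (2 * ∑ j ∈ Finset.range (M + 1), (j + 1)) := by ring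
        _ = M * (M + 1) * (M + 2) + 3 * ((M + 1) * (M + 1 + 1)) := by rw [h1]
        _ = (M + 1) * (M + 1 + 1) * (M + 1 + 2) := by ring

lemma card_simplex (ν : ℕ) :
    6 * ((Finset.range (ν + 1) ×ˢ Finset.range (ν + 1) ×ˢ Finset.range (ν + 1)).filter
      fun w : ℕ × ℕ × ℕ => w.1 + w.2.1 + w.2.2 ≤ ν).card = (ν + 1) * (ν + 2) * (ν + 3) := by
  have hcard : ((Finset.range (ν + 1) ×ˢ Finset.range (ν + 1) ×ˢ Finset.range (ν + 1)).filter
      fun w : ℕ × ℕ × ℕ => w.1 + w.2.1 + w.2.2 ≤ ν).card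
      = ∑ i ∈ Finset.range (ν + 1), ∑ j ∈ Finset.range (ν + 1), (ν + 1 - i - j) := by
    rw [Finset.card_filter, Finset.sum_product]
    refine Finset.sum_congr rfl fun i _ => ?_
    rw [Finset.sum_product]
    refine Finset.sum_congr rfl fun j _ => ?_
    have hf : (Finset.range (ν + 1)).filter (fun l => i + j + l ≤ ν)
        = Finset.range (ν + 1 - i - j) := by
      ext l
      simp only [Finset.mem_filter, Finset.mem_range]
      omega
    rw [← Finset.card_filter, hf, Finset.card_range]
  rw [hcard]
  have h2 : ∑ i ∈ Finset.range (ν + 1), ∑ j ∈ Finset.range (ν + 1), (ν + 1 - i - j)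
      = ∑ i ∈ Finset.range (ν + 1), ∑ j ∈ Finset.range (ν + 1 - i), (j + 1) :=
    Finset.sum_congr rfl fun i _ => sum_sub_eq (ν + 1 - i) (ν + 1) (Nat.sub_le _ _)
  rw [h2]
  have h3 : ∑ i ∈ Finset.range (ν + 1), (∑ j ∈ Finset.range (ν + 1 - i), (j + 1))
      = ∑ i ∈ Finset.range (ν + 1), (∑ j ∈ Finset.range (i + 1), (j + 1)) := by
    calc ∑ i ∈ Finset.range (ν + 1), (∑ j ∈ Finset.range (ν + 1 - i), (j + 1))
        = ∑ i ∈ Finset.range (ν + 1), (∑ j ∈ Finset.range ((ν + 1 - 1 - i) + 1), (j + 1)) :=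
          Finset.sum_congr rfl fun i hi => by
            have hle := Finset.mem_range.mp hi
            have hx : ν + 1 - i = (ν + 1 - 1 - i) + 1 := by omega
            rw [hx]
      _ = ∑ i ∈ Finset.range (ν + 1), (∑ j ∈ Finset.range (i + 1), (j + 1)) :=
          Finset.sum_range_reflect (fun i => ∑ j ∈ Finset.range (i + 1), (j + 1)) (ν + 1)
  rw [h3, gauss2]


lemma keyineq (dx dy ν : ℕ) (hν : ν = 6 * (dx+1) * (dy+1)) :
    6 * ((ν + (ν+1)*dx + 1) * ((ν+1)*dy + 1)) < (ν+1) * (ν+2) * (ν+3) := by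
  have h1 : ν + (ν+1)*dx + 1 = (ν+1)*(dx+1) := by ring
  rw [h1]
  have h2 : 6 * ((ν+1)*(dx+1) * ((ν+1)*dy + 1)) = (ν+1) * (6*(dx+1)*((ν+1)*dy+1)) := by ring
  have h3 : (ν+1) * (ν+2) * (ν+3) = (ν+1) * ((ν+2)*(ν+3)) := by ring
  rw [h2, h3]
  refine mul_lt_mul_of_pos_left ?_ (by omega)
  have key : 6*(dx+1)*((ν+1)*dy+1) + 6*(dx+1)*(ν+1) = ν*(ν+1) + 6*(dx+1) := by
    rw [hν]; ring
  have h4 : 6*(dx+1) ≤ 6*(dx+1)*(ν+1) := Nat.le_mul_of_pos_right _ (by omega)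
  have h5 : ν*(ν+1) < (ν+2)*(ν+3) := by nlinarith

  omega

end S17

/-- Lipshitz's filtration. For a nonzero `f = P/Q ∈ k(x,y)` with
`bideg(P), bideg(Q) ≤ (d_x, d_y)` and `ν = 6·(d_x+1)·(d_y+1)`, there is a family
`(c_{i,j,ℓ})` of elements of `k`, indexed by the triples with `i+j+ℓ ≤ ν` and not all zero,
such that `∑ c_{i,j,ℓ}·x^i·D_x^j(D_y^ℓ(f)) = 0`. -/
theorem stmt_17 {k : Type*} [Field k] [CharZero k]
    (P Q : Polynomial (Polynomial k))
    (hP : P ≠ 0) (hQ : Q ≠ 0)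
    (dx dy : ℕ)
    (hPdx : degX P ≤ dx) (hQdx : degX Q ≤ dx)
    (hPdy : P.natDegree ≤ dy) (hQdy : Q.natDegree ≤ dy)
    (Dy : RatFunc (RatFunc k) → RatFunc (RatFunc k)) (hDy : IsDeriv Dy)
    (hDyval : ∀ A : Polynomial (RatFunc k), Dy (kyToF A) = kyToF (Polynomial.derivative A))
    (Dx : RatFunc (RatFunc k) → RatFunc (RatFunc k)) (hDx : IsDeriv Dx)
    (hDxval : ∀ A : Polynomial (Polynomial k), Dx (toF A) = toF (derivX A))
    (ν : ℕ) (hν : ν = 6 * (dx + 1) * (dy + 1))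
    (S : Finset (ℕ × ℕ × ℕ))
    (hS : S = (Finset.range (ν + 1) ×ˢ Finset.range (ν + 1) ×ˢ
      Finset.range (ν + 1)).filter fun w => w.1 + w.2.1 + w.2.2 ≤ ν) :
    ∃ c : ℕ × ℕ × ℕ → k,
      (∃ w ∈ S, c w ≠ 0) ∧
      ∑ w ∈ S, toF (Polynomial.C (Polynomial.C (c w))) *
        (toF (Polynomial.C Polynomial.X) ^ w.1 *
          Dx^[w.2.1] (Dy^[w.2.2] (toF P / toF Q))) = 0 := by
  classical
  have hQF : toF Q ≠ 0 := S17.toF_ne_zero hQ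
  have hDyval' : ∀ A : Polynomial (Polynomial k), Dy (toF A) = toF (Polynomial.derivative A) := by
    intro A
    have h0 : toF A = kyToF (toKy A) := rfl
    have h1 : Polynomial.derivative (toKy A) = toKy (Polynomial.derivative A) :=
      Polynomial.derivative_map A (algebraMap (Polynomial k) (RatFunc k))
    rw [h0, hDyval, h1]
    rfl
  have hrep : ∀ j l : ℕ, ∃ A, degX A ≤ (j + l + 1) * dx ∧ A.natDegree ≤ (j + l + 1) * dy ∧
      Dx^[j] (Dy^[l] (toF P / toF Q)) = toF A / toF Q ^ (j + l + 1) := by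
    intro j l
    obtain ⟨B, hB1, hB2, hB3⟩ := S17.rep_iter Q hQF dx dy hQdx hQdy hDy hDyval'
      S17.degX_derivative_le
      (fun A => (Polynomial.natDegree_derivative_le A).trans (Nat.sub_le _ _)) l 0
      (toF P / toF Q)
      ⟨P, by simpa using hPdx, by simpa using hPdy, by norm_num⟩
    have e1 : 0 + l + 1 = l + 1 := by omega
    rw [e1] at hB1 hB2 hB3
    obtain ⟨A, hA1, hA2, hA3⟩ := S17.rep_iter Q hQF dx dy hQdx hQdy hDx hDxval
      S17.degX_derivX_le S17.natDegree_derivX_le j l (Dy^[l] (toF P / toF Q))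
      ⟨B, hB1, hB2, hB3⟩
    have e2 : l + j + 1 = j + l + 1 := by omega
    rw [e2] at hA1 hA2 hA3
    exact ⟨A, hA1, hA2, hA3⟩
  set DX := ν + (ν + 1) * dx with hDXdef
  set DY := (ν + 1) * dy with hDYdef
  have hvmem : ∀ w : ℕ × ℕ × ℕ, w ∈ S →
      toF (Polynomial.C Polynomial.X) ^ w.1 * Dx^[w.2.1] (Dy^[w.2.2] (toF P / toF Q)) ∈
        Submodule.span k (Set.range (fun p : Fin (DX + 1) × Fin (DY + 1) =>
          toF (Polynomial.C (Polynomial.X ^ (p.1 : ℕ)) * Polynomial.X ^ (p.2 : ℕ)) /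
            (toF Q ^ (ν + 1)))) := by
    intro w hw
    have hwS : w.1 + w.2.1 + w.2.2 ≤ ν := by
      rw [hS] at hw
      exact (Finset.mem_filter.mp hw).2
    obtain ⟨A, hA1, hA2, hA3⟩ := hrep w.2.1 w.2.2
    set n := w.2.1 + w.2.2 with hn
    have hveq : toF (Polynomial.C Polynomial.X) ^ w.1 * Dx^[w.2.1] (Dy^[w.2.2] (toF P / toF Q))
        = toF (Polynomial.C Polynomial.X ^ w.1 * (A * Q ^ (ν - n))) / toF Q ^ (ν + 1) := by
      rw [hA3]
      rw [map_mul, map_mul, map_pow, map_pow]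
      have hsplit : toF Q ^ (ν + 1) = toF Q ^ (ν - n) * toF Q ^ (n + 1) := by
        rw [← pow_add]
        congr 1
        omega
      rw [hsplit]
      field_simp
    rw [hveq]
    apply S17.mem_span
    · have hmulx : (n + 1) * dx + (ν - n) * dx = (ν + 1) * dx := by
        rw [← Nat.add_mul]
        congr 1
        omega
      calc degX (Polynomial.C Polynomial.X ^ w.1 * (A * Q ^ (ν - n)))
          ≤ degX (Polynomial.C Polynomial.X ^ w.1) + degX (A * Q ^ (ν - n)) :=
            S17.degX_mul_le _ _
        _ ≤ w.1 * degX (Polynomial.C (Polynomial.X : Polynomial k)) +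
              (degX A + degX (Q ^ (ν - n))) :=
            add_le_add (S17.degX_pow_le _ _) (S17.degX_mul_le _ _)
        _ ≤ w.1 * 1 + ((n + 1) * dx + (ν - n) * dx) := by
            refine add_le_add (Nat.mul_le_mul le_rfl ?_) (add_le_add hA1 ?_)
            · exact (S17.degX_C_le _).trans (le_of_eq Polynomial.natDegree_X)
            · exact (S17.degX_pow_le _ _).trans (Nat.mul_le_mul le_rfl hQdx)
        _ ≤ DX := by
            rw [hmulx, hDXdef]
            omega
    · have hmuly : (n + 1) * dy + (ν - n) * dy = (ν + 1) * dy := by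
        rw [← Nat.add_mul]
        congr 1
        omega
      calc (Polynomial.C Polynomial.X ^ w.1 * (A * Q ^ (ν - n))).natDegree
          ≤ (Polynomial.C Polynomial.X ^ w.1).natDegree + (A * Q ^ (ν - n)).natDegree :=
            Polynomial.natDegree_mul_le
        _ ≤ w.1 * (Polynomial.C (Polynomial.X : Polynomial k)).natDegree +
              (A.natDegree + (Q ^ (ν - n)).natDegree) :=
            add_le_add Polynomial.natDegree_pow_le Polynomial.natDegree_mul_le
        _ ≤ w.1 * 0 + ((n + 1) * dy + (ν - n) * dy) := by
            refine add_le_add (Nat.mul_le_mul le_rfl ?_) (add_le_add hA2 ?_)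
            · exact le_of_eq (Polynomial.natDegree_C _)
            · exact Polynomial.natDegree_pow_le.trans (Nat.mul_le_mul le_rfl hQdy)
        _ ≤ DY := by
            rw [hmuly, hDYdef]
            omega
  have hns : ¬ LinearIndependent k (fun w : {x // x ∈ S} =>
      toF (Polynomial.C Polynomial.X) ^ (w : ℕ × ℕ × ℕ).1 *
        Dx^[(w : ℕ × ℕ × ℕ).2.1] (Dy^[(w : ℕ × ℕ × ℕ).2.2] (toF P / toF Q))) := by
    intro hli
    set mon : Fin (DX + 1) × Fin (DY + 1) → RatFunc (RatFunc k) := fun p =>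
      toF (Polynomial.C (Polynomial.X ^ (p.1 : ℕ)) * Polynomial.X ^ (p.2 : ℕ)) /
        (toF Q ^ (ν + 1)) with hmon
    set W := Submodule.span k (Set.range mon) with hW
    haveI : FiniteDimensional k W := FiniteDimensional.span_of_finite k (Set.finite_range mon)
    have hli2 : LinearIndependent k (fun w : {x // x ∈ S} =>
        (⟨toF (Polynomial.C Polynomial.X) ^ (w : ℕ × ℕ × ℕ).1 *
          Dx^[(w : ℕ × ℕ × ℕ).2.1] (Dy^[(w : ℕ × ℕ × ℕ).2.2] (toF P / toF Q)),
          hvmem w w.2⟩ : W)) := by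
      apply LinearIndependent.of_comp W.subtype
      exact hli
    have hc1 := hli2.fintype_card_le_finrank
    have hc2 : Module.finrank k W ≤ (Set.range mon).toFinset.card := finrank_span_le_card _
    have hc3 : (Set.range mon).toFinset.card ≤ (DX + 1) * (DY + 1) := by
      rw [Set.toFinset_card]
      calc Fintype.card (Set.range mon) ≤ Fintype.card (Fin (DX + 1) × Fin (DY + 1)) :=
            Fintype.card_range_le mon
        _ = (DX + 1) * (DY + 1) := by simp
    have hcard : Fintype.card {x // x ∈ S} = S.card := Fintype.card_coe S
    have h6S : 6 * S.card = (ν + 1) * (ν + 2) * (ν + 3) := by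
      rw [hS]
      exact S17.card_simplex ν
    have hkey2 : 6 * ((DX + 1) * (DY + 1)) < (ν + 1) * (ν + 2) * (ν + 3) := by
      rw [hDXdef, hDYdef]
      exact S17.keyineq dx dy ν hν
    omega
  obtain ⟨g, hg, i0, hi0⟩ := Fintype.not_linearIndependent_iff.mp hns
  refine ⟨fun w => if h : w ∈ S then g ⟨w, h⟩ else 0, ⟨i0, i0.2, ?_⟩, ?_⟩
  · show (if h : (i0 : ℕ × ℕ × ℕ) ∈ S then g ⟨(i0 : ℕ × ℕ × ℕ), h⟩ else 0) ≠ 0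
    rw [dif_pos i0.2]
    simpa using hi0
  · have hsum : ∑ w ∈ S, (if h : w ∈ S then g ⟨w, h⟩ else 0) •
        (toF (Polynomial.C Polynomial.X) ^ w.1 *
          Dx^[w.2.1] (Dy^[w.2.2] (toF P / toF Q))) = 0 := by
      rw [← Finset.sum_coe_sort S]
      rw [← hg]
      refine Finset.sum_congr rfl fun i _ => ?_
      rw [dif_pos i.2]
    calc ∑ w ∈ S, toF (Polynomial.C (Polynomial.C
            ((fun w => if h : w ∈ S then g ⟨w, h⟩ else 0) w))) *
          (toF (Polynomial.C Polynomial.X) ^ w.1 *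
            Dx^[w.2.1] (Dy^[w.2.2] (toF P / toF Q)))
        = ∑ w ∈ S, (if h : w ∈ S then g ⟨w, h⟩ else 0) •
            (toF (Polynomial.C Polynomial.X) ^ w.1 *
              Dx^[w.2.1] (Dy^[w.2.2] (toF P / toF Q))) := by
          refine Finset.sum_congr rfl fun w hw => ?_
          rw [Algebra.smul_def, S17.algebraMap_eq_toF]
      _ = 0 := hsum
end
end

section
/- Let f = P/Q be a nonzero rational function in k(x,y) with P, Q in k[x,y], Q ≠ 0, deg_x(P) ≤ d_x, deg_x(Q) ≤ d_x, deg_y(P) ≤ d_y, deg_y(Q) ≤ d_y, and d_y ≥ 1. Set κ = 3·d_x·d_y and ν = 6·d_y. Then there exists a family (c_{i,j,ℓ}) of elements of k, indexed by triples (i,j,ℓ) of natural numbers with i ≤ κ and j + ℓ ≤ ν and not all zero, such that Σ_{i ≤ κ, j+ℓ ≤ ν} c_{i,j,ℓ}·x^i·D_x^j(D_y^ℓ(f)) = 0 in k(x,y). -/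
open Polynomial

noncomputable section

section Lemmas
variable {k : Type*} [Field k]

lemma degX_le_iff {B : Polynomial (Polynomial k)} {n : ℕ} :
    degX B ≤ n ↔ ∀ i, (B.coeff i).natDegree ≤ n := by
  constructor
  · intro h i
    by_cases hi : i ∈ B.support
    · exact le_trans (Finset.le_sup (f := fun i => (B.coeff i).natDegree) hi) h
    · simp [Polynomial.notMem_support_iff.mp hi]
  · intro h
    exact Finset.sup_le fun i _ => h i

lemma coeff_le_degX (B : Polynomial (Polynomial k)) (i : ℕ) :
    (B.coeff i).natDegree ≤ degX B := degX_le_iff.mp le_rfl i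

lemma degX_mul_le (A B : Polynomial (Polynomial k)) :
    degX (A * B) ≤ degX A + degX B := by
  rw [degX_le_iff]
  intro i
  rw [Polynomial.coeff_mul]
  apply natDegree_sum_le_of_forall_le
  intro p hp
  exact le_trans (natDegree_mul_le) (add_le_add (coeff_le_degX A p.1) (coeff_le_degX B p.2))

lemma degX_sub_le (A B : Polynomial (Polynomial k)) :
    degX (A - B) ≤ max (degX A) (degX B) := by
  rw [degX_le_iff]
  intro i
  rw [Polynomial.coeff_sub]
  exact le_trans (natDegree_sub_le _ _)
    (max_le_max (coeff_le_degX A i) (coeff_le_degX B i))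

lemma degX_natCast (n : ℕ) : degX (n : Polynomial (Polynomial k)) = 0 := by
  rw [← Nat.le_zero, degX_le_iff]
  intro i
  rcases eq_or_ne i 0 with rfl | h
  · simp [Polynomial.coeff_natCast_ite]
  · simp [Polynomial.coeff_natCast_ite, h]

lemma coeff_derivX (B : Polynomial (Polynomial k)) (i : ℕ) :
    (derivX B).coeff i = Polynomial.derivative (B.coeff i) := by
  rw [derivX, Polynomial.sum, finset_sum_coeff]
  simp only [Polynomial.coeff_C_mul_X_pow]
  rw [Finset.sum_ite_eq B.support i (fun j => Polynomial.derivative (B.coeff j))]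
  by_cases hi : i ∈ B.support
  · simp [hi]
  · simp [hi, Polynomial.notMem_support_iff.mp hi]

lemma degX_derivX_le (B : Polynomial (Polynomial k)) : degX (derivX B) ≤ degX B := by
  rw [degX_le_iff]
  intro i
  rw [coeff_derivX]
  exact le_trans (natDegree_derivative_le _) (le_trans (Nat.sub_le _ _) (coeff_le_degX B i))

lemma natDegree_derivX_le (B : Polynomial (Polynomial k)) :
    (derivX B).natDegree ≤ B.natDegree := by
  rw [natDegree_le_iff_coeff_eq_zero]
  intro N hN
  rw [coeff_derivX, Polynomial.coeff_eq_zero_of_natDegree_lt hN, map_zero]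

lemma degX_derivative_le (B : Polynomial (Polynomial k)) :
    degX (Polynomial.derivative B) ≤ degX B := by
  rw [degX_le_iff]
  intro i
  rw [Polynomial.coeff_derivative]
  refine le_trans natDegree_mul_le ?_
  have h1 : ((i : Polynomial k) + 1).natDegree = 0 := by
    have : ((i : Polynomial k) + 1) = ((i + 1 : ℕ) : Polynomial k) := by push_cast; ring
    rw [this, Polynomial.natDegree_natCast]
  rw [h1, add_zero]
  exact coeff_le_degX B (i+1)

section Deriv
variable {F : Type*} [CommRing F] {D : F → F} (hD : IsDeriv D)

include hD

lemma IsDeriv.map_zero' : D 0 = 0 := by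
  have h := hD.1 0 0
  simp at h
  exact h

lemma IsDeriv.map_pow (u : F) : ∀ n : ℕ, D (u ^ (n + 1)) = (n + 1 : F) * u ^ n * D u := by
  intro n
  induction n with
  | zero => simp
  | succ m ih =>
    have h : u ^ (m + 2) = u * u ^ (m + 1) := by ring
    rw [h, hD.2 u (u ^ (m + 1)), ih]
    push_cast
    ring

end Deriv


lemma toF_injective : Function.Injective (toF (k := k)) := by
  have h1 : Function.Injective (algebraMap (Polynomial (RatFunc k)) (RatFunc (RatFunc k))) :=
    IsFractionRing.injective _ _
  have h2 : Function.Injective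
      (Polynomial.map (algebraMap (Polynomial k) (RatFunc k))) :=
    Polynomial.map_injective _ (IsFractionRing.injective (Polynomial k) (RatFunc k))
  intro a b hab
  exact h2 (h1 hab)

lemma deriv_step {D : RatFunc (RatFunc k) → RatFunc (RatFunc k)} (hD : IsDeriv D)
    {d : Polynomial (Polynomial k) → Polynomial (Polynomial k)}
    (hval : ∀ A, D (toF A) = toF (d A)) (Q : Polynomial (Polynomial k)) (m : ℕ)
    (g : RatFunc (RatFunc k)) (A : Polynomial (Polynomial k))
    (hA : g * toF Q ^ (m + 1) = toF A) :
    D g * toF Q ^ (m + 2) =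
      toF (Q * d A - ((m + 1 : ℕ) : Polynomial (Polynomial k)) * d Q * A) := by
  have h1 := congrArg D hA
  rw [hval, hD.2 g (toF Q ^ (m + 1)), hD.map_pow (toF Q) m, hval] at h1
  simp only [map_sub, map_mul, map_natCast]
  push_cast at h1 ⊢
  linear_combination (toF Q) * h1 -
    (((m : RatFunc (RatFunc k)) + 1) * toF (d Q)) * hA

def GoodF {k : Type*} [Field k] (Q : Polynomial (Polynomial k)) (dx dy m : ℕ)
    (g : RatFunc (RatFunc k)) : Prop :=
  ∃ A : Polynomial (Polynomial k), degX A ≤ (m + 1) * dx ∧ A.natDegree ≤ (m + 1) * dy ∧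
    g * toF Q ^ (m + 1) = toF A

section Good
variable {k : Type*} [Field k] {Q : Polynomial (Polynomial k)} {dx dy : ℕ}
  {D : RatFunc (RatFunc k) → RatFunc (RatFunc k)}
  {d : Polynomial (Polynomial k) → Polynomial (Polynomial k)}

lemma good_step (hQdx : degX Q ≤ dx) (hQdy : Q.natDegree ≤ dy) (hD : IsDeriv D)
    (hval : ∀ A, D (toF A) = toF (d A))
    (hd1 : ∀ B, degX (d B) ≤ degX B) (hd2 : ∀ B, (d B).natDegree ≤ B.natDegree)
    {m : ℕ} {g : RatFunc (RatFunc k)} (hg : GoodF Q dx dy m g) :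
    GoodF Q dx dy (m + 1) (D g) := by
  obtain ⟨A, h1, h2, h3⟩ := hg
  refine ⟨Q * d A - ((m + 1 : ℕ) : Polynomial (Polynomial k)) * d Q * A, ?_, ?_,
    deriv_step hD hval Q m g A h3⟩
  · refine le_trans (degX_sub_le _ _) (max_le ?_ ?_)
    · calc degX (Q * d A) ≤ degX Q + degX (d A) := degX_mul_le _ _
        _ ≤ dx + (m + 1) * dx := add_le_add hQdx (le_trans (hd1 A) h1)
        _ = (m + 1 + 1) * dx := by ring
    · calc degX (((m + 1 : ℕ) : Polynomial (Polynomial k)) * d Q * A)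
          ≤ degX (((m + 1 : ℕ) : Polynomial (Polynomial k)) * d Q) + degX A := degX_mul_le _ _
        _ ≤ (degX ((m + 1 : ℕ) : Polynomial (Polynomial k)) + degX (d Q)) + degX A :=
            Nat.add_le_add_right (degX_mul_le _ _) _
        _ ≤ (0 + dx) + (m + 1) * dx :=
            add_le_add (add_le_add (le_of_eq (degX_natCast _)) (le_trans (hd1 Q) hQdx)) h1
        _ = (m + 1 + 1) * dx := by ring
  · refine le_trans (natDegree_sub_le _ _) (max_le ?_ ?_)
    · calc (Q * d A).natDegree ≤ Q.natDegree + (d A).natDegree := natDegree_mul_le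
        _ ≤ dy + (m + 1) * dy := add_le_add hQdy (le_trans (hd2 A) h2)
        _ = (m + 1 + 1) * dy := by ring
    · calc (((m + 1 : ℕ) : Polynomial (Polynomial k)) * d Q * A).natDegree
          ≤ (((m + 1 : ℕ) : Polynomial (Polynomial k)) * d Q).natDegree + A.natDegree :=
            natDegree_mul_le
        _ ≤ (((m + 1 : ℕ) : Polynomial (Polynomial k)).natDegree + (d Q).natDegree)
              + A.natDegree := Nat.add_le_add_right natDegree_mul_le _
        _ ≤ (0 + dy) + (m + 1) * dy := by
            refine add_le_add (add_le_add ?_ (le_trans (hd2 Q) hQdy)) h2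
            have e : (m : Polynomial (Polynomial k)) + 1 =
                (((m + 1 : ℕ)) : Polynomial (Polynomial k)) := by push_cast; ring
            rw [show (((m + 1 : ℕ)) : Polynomial (Polynomial k)).natDegree = 0 from
              Polynomial.natDegree_natCast _]
        _ = (m + 1 + 1) * dy := by ring

lemma good_iterate (hQdx : degX Q ≤ dx) (hQdy : Q.natDegree ≤ dy) (hD : IsDeriv D)
    (hval : ∀ A, D (toF A) = toF (d A))
    (hd1 : ∀ B, degX (d B) ≤ degX B) (hd2 : ∀ B, (d B).natDegree ≤ B.natDegree)
    {m : ℕ} {g : RatFunc (RatFunc k)} (hg : GoodF Q dx dy m g) (n : ℕ) :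
    GoodF Q dx dy (m + n) (D^[n] g) := by
  induction n with
  | zero => simpa using hg
  | succ p ih =>
    rw [Function.iterate_succ_apply']
    have := good_step hQdx hQdy hD hval hd1 hd2 ih
    simpa [add_assoc] using this

end Good

section More
variable {k : Type*} [Field k]

lemma degX_one_le : degX (1 : Polynomial (Polynomial k)) ≤ 0 := by
  rw [degX_le_iff]
  intro i
  rcases eq_or_ne i 0 with rfl | h
  · simp [Polynomial.coeff_one]
  · simp [Polynomial.coeff_one, h]

lemma degX_pow_le (B : Polynomial (Polynomial k)) (n : ℕ) : degX (B ^ n) ≤ n * degX B := by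
  induction n with
  | zero => simpa using degX_one_le
  | succ p ih =>
    rw [pow_succ]
    calc degX (B ^ p * B) ≤ degX (B ^ p) + degX B := degX_mul_le _ _
      _ ≤ p * degX B + degX B := Nat.add_le_add_right ih _
      _ = (p + 1) * degX B := by ring

lemma degX_C_le (p : Polynomial k) : degX (Polynomial.C p) ≤ p.natDegree := by
  rw [degX_le_iff]
  intro i
  rcases eq_or_ne i 0 with rfl | h
  · simp [Polynomial.coeff_C]
  · simp [Polynomial.coeff_C, h]

lemma poly_decomp {X Y : ℕ} (B : Polynomial (Polynomial k))
    (h1 : degX B ≤ X) (h2 : B.natDegree ≤ Y) :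
    B = ∑ p ∈ Finset.range (X + 1) ×ˢ Finset.range (Y + 1),
      Polynomial.C (Polynomial.C ((B.coeff p.2).coeff p.1)) *
        (Polynomial.C Polynomial.X ^ p.1 * Polynomial.X ^ p.2) := by
  rw [Finset.sum_product_right]
  conv_lhs => rw [B.as_sum_range' (Y + 1) (Nat.lt_succ_of_le h2)]
  refine Finset.sum_congr rfl ?_
  intro b _
  rw [← Polynomial.C_mul_X_pow_eq_monomial]
  have hc : (B.coeff b).natDegree < X + 1 :=
    Nat.lt_succ_of_le (le_trans (coeff_le_degX B b) h1)
  conv_lhs => rw [(B.coeff b).as_sum_range' (X + 1) hc]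
  rw [map_sum, Finset.sum_mul]
  refine Finset.sum_congr rfl ?_
  intro a _
  rw [← Polynomial.C_mul_X_pow_eq_monomial, map_mul, ← map_pow]
  ring

lemma card_triangle (n : ℕ) :
    ((Finset.range (n + 1) ×ˢ Finset.range (n + 1)).filter
      fun p => p.1 + p.2 ≤ n).card * 2 = (n + 1) * (n + 2) := by
  have he : ((Finset.range (n + 1) ×ˢ Finset.range (n + 1)).filter
      fun p => p.1 + p.2 ≤ n) = (Finset.range (n + 1)).biUnion Finset.HasAntidiagonal.antidiagonal := by
    ext p
    simp only [Finset.mem_filter, Finset.mem_product, Finset.mem_range, Finset.mem_biUnion,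
      Finset.HasAntidiagonal.mem_antidiagonal]
    constructor
    · rintro ⟨⟨_, _⟩, h3⟩
      exact ⟨p.1 + p.2, by omega, rfl⟩
    · rintro ⟨m, hm, hme⟩
      omega
  rw [he, Finset.card_biUnion]
  · have h1 : ∑ m ∈ Finset.range (n + 1), (Finset.HasAntidiagonal.antidiagonal m).card
        = ∑ m ∈ Finset.range (n + 1), (m + 1) := by
      refine Finset.sum_congr rfl fun m _ => Finset.Nat.card_antidiagonal m
    rw [h1]
    have h2 : ∑ m ∈ Finset.range (n + 1), (m + 1) = ∑ m ∈ Finset.range (n + 2), m := by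
      rw [Finset.sum_range_succ' (fun m => m) (n + 1)]
      simp
    rw [h2, Finset.sum_range_id_mul_two]
    have hnn : n + 2 - 1 = n + 1 := rfl
    rw [hnn]
    ring
  · intro x _ y _ hxy
    rw [Function.onFun, Finset.disjoint_left]
    intro p hp hq
    rw [Finset.HasAntidiagonal.mem_antidiagonal] at hp hq
    omega

end More

end Lemmas

set_option maxHeartbeats 1000000 in
/-- the better filtration of `BCLSS2007`. For a nonzero `f = P/Q ∈ k(x,y)`
with `bideg(P), bideg(Q) ≤ (d_x, d_y)`, `d_y ≥ 1`, `κ = 3·d_x·d_y` and `ν = 6·d_y`, there is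
a family `(c_{i,j,ℓ})` of elements of `k`, indexed by the triples with `i ≤ κ` and
`j + ℓ ≤ ν` and not all zero, such that `∑ c_{i,j,ℓ}·x^i·D_x^j(D_y^ℓ(f)) = 0`. -/
theorem stmt_18 {k : Type*} [Field k] [CharZero k]
    (P Q : Polynomial (Polynomial k))
    (hP : P ≠ 0) (hQ : Q ≠ 0)
    (dx dy : ℕ) (hdy : 1 ≤ dy)
    (hPdx : degX P ≤ dx) (hQdx : degX Q ≤ dx)
    (hPdy : P.natDegree ≤ dy) (hQdy : Q.natDegree ≤ dy)
    (Dy : RatFunc (RatFunc k) → RatFunc (RatFunc k)) (hDy : IsDeriv Dy)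
    (hDyval : ∀ A : Polynomial (RatFunc k), Dy (kyToF A) = kyToF (Polynomial.derivative A))
    (Dx : RatFunc (RatFunc k) → RatFunc (RatFunc k)) (hDx : IsDeriv Dx)
    (hDxval : ∀ A : Polynomial (Polynomial k), Dx (toF A) = toF (derivX A))
    (κ ν : ℕ) (hκ : κ = 3 * dx * dy) (hν : ν = 6 * dy)
    (S : Finset (ℕ × ℕ × ℕ))
    (hS : S = (Finset.range (κ + 1) ×ˢ Finset.range (ν + 1) ×ˢ
      Finset.range (ν + 1)).filter fun w => w.1 ≤ κ ∧ w.2.1 + w.2.2 ≤ ν) :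
    ∃ c : ℕ × ℕ × ℕ → k,
      (∃ w ∈ S, c w ≠ 0) ∧
      ∑ w ∈ S, toF (Polynomial.C (Polynomial.C (c w))) *
        (toF (Polynomial.C Polynomial.X) ^ w.1 *
          Dx^[w.2.1] (Dy^[w.2.2] (toF P / toF Q))) = 0 := by
  classical
  have hQ0 : toF Q ≠ 0 := fun h => hQ (toF_injective (by rw [h, map_zero]))
  -- Dy value on toF
  have hDyval' : ∀ A : Polynomial (Polynomial k),
      Dy (toF A) = toF (Polynomial.derivative A) := by
    intro A
    have h0 : toF (k := k) A = kyToF (toKy A) := rfl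
    have h1 : toF (Polynomial.derivative A) = kyToF (toKy (Polynomial.derivative A)) := rfl
    rw [h0, hDyval, h1]
    congr 1
    show Polynomial.derivative (Polynomial.map _ A) = Polynomial.map _ (Polynomial.derivative A)
    exact Polynomial.derivative_map A _
  -- goodness of iterated derivatives
  have key : ∀ j ℓ : ℕ, GoodF Q dx dy (j + ℓ) (Dx^[j] (Dy^[ℓ] (toF P / toF Q))) := by
    intro j ℓ
    have base : GoodF Q dx dy 0 (toF P / toF Q) :=
      ⟨P, by simpa using hPdx, by simpa using hPdy,
        by rw [pow_one]; exact div_mul_cancel₀ (toF P) hQ0⟩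
    have hy : GoodF Q dx dy ℓ (Dy^[ℓ] (toF P / toF Q)) := by
      simpa using good_iterate hQdx hQdy hDy hDyval' (fun B => degX_derivative_le B)
        (fun B => le_trans (Polynomial.natDegree_derivative_le B) (Nat.sub_le _ _)) base ℓ
    have hx := good_iterate hQdx hQdy hDx hDxval (fun B => degX_derivX_le B)
      (fun B => natDegree_derivX_le B) hy j
    simpa [add_comm] using hx
  set X := κ + (ν + 1) * dx with hX
  set Y := (ν + 1) * dy with hY
  set v : ℕ × ℕ × ℕ → RatFunc (RatFunc k) := fun w =>
    toF (Polynomial.C Polynomial.X) ^ w.1 * Dx^[w.2.1] (Dy^[w.2.2] (toF P / toF Q)) with hv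
  -- each vector is a polynomial of bounded bidegree over Q^(ν+1)
  have hvec : ∀ w ∈ S, ∃ B : Polynomial (Polynomial k), degX B ≤ X ∧ B.natDegree ≤ Y ∧
      v w * toF Q ^ (ν + 1) = toF B := by
    intro w hw
    have hwS : w.2.1 + w.2.2 ≤ ν := by
      rw [hS] at hw
      simp only [Finset.mem_filter] at hw
      exact hw.2.2
    obtain ⟨A, h1, h2, h3⟩ := key w.2.1 w.2.2
    set m := w.2.1 + w.2.2 with hm
    refine ⟨Polynomial.C Polynomial.X ^ w.1 * A * Q ^ (ν - m), ?_, ?_, ?_⟩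
    · calc degX (Polynomial.C Polynomial.X ^ w.1 * A * Q ^ (ν - m))
          ≤ degX (Polynomial.C Polynomial.X ^ w.1 * A) + degX (Q ^ (ν - m)) := degX_mul_le _ _
        _ ≤ (degX (Polynomial.C Polynomial.X ^ w.1) + degX A) + degX (Q ^ (ν - m)) :=
            Nat.add_le_add_right (degX_mul_le _ _) _
        _ ≤ (w.1 * 1 + (m + 1) * dx) + (ν - m) * dx := by
            refine add_le_add (add_le_add ?_ h1) ?_
            · refine le_trans (degX_pow_le _ _) ?_
              have : degX (Polynomial.C (Polynomial.X : Polynomial k)) ≤ 1 := by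
                simpa using degX_C_le (Polynomial.X : Polynomial k)
              exact Nat.mul_le_mul_left _ this
            · exact le_trans (degX_pow_le _ _) (Nat.mul_le_mul_left _ hQdx)
        _ ≤ X := by
            have hw1 : w.1 ≤ κ := by
              rw [hS] at hw
              simp only [Finset.mem_filter] at hw
              exact hw.2.1
            have hmν : m ≤ ν := hwS
            have : (m + 1) * dx + (ν - m) * dx = (ν + 1) * dx := by
              rw [← Nat.add_mul]
              congr 1
              omega
            omega
    · calc (Polynomial.C Polynomial.X ^ w.1 * A * Q ^ (ν - m)).natDegree
          ≤ (Polynomial.C Polynomial.X ^ w.1 * A).natDegree + (Q ^ (ν - m)).natDegree :=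
            Polynomial.natDegree_mul_le
        _ ≤ ((Polynomial.C Polynomial.X ^ w.1).natDegree + A.natDegree)
              + (Q ^ (ν - m)).natDegree := Nat.add_le_add_right Polynomial.natDegree_mul_le _
        _ ≤ (0 + (m + 1) * dy) + (ν - m) * dy := by
            refine add_le_add (add_le_add ?_ h2) ?_
            · simp [Polynomial.natDegree_pow]
            · exact le_trans (Polynomial.natDegree_pow_le) (Nat.mul_le_mul_left _ hQdy)
        _ ≤ Y := by
            have hmν : m ≤ ν := hwS
            have : (m + 1) * dy + (ν - m) * dy = (ν + 1) * dy := by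
              rw [← Nat.add_mul]
              congr 1
              omega
            omega
    · have hsplit : ν + 1 = (m + 1) + (ν - m) := by omega
      rw [hsplit, pow_add]
      simp only [map_mul, map_pow]
      rw [hv]
      calc toF (Polynomial.C Polynomial.X) ^ w.1 * Dx^[w.2.1] (Dy^[w.2.2] (toF P / toF Q)) *
            (toF Q ^ (m + 1) * toF Q ^ (ν - m))
          = toF (Polynomial.C Polynomial.X) ^ w.1 *
              (Dx^[w.2.1] (Dy^[w.2.2] (toF P / toF Q)) * toF Q ^ (m + 1)) *
              toF Q ^ (ν - m) := by ring
        _ = toF (Polynomial.C Polynomial.X) ^ w.1 * toF A * toF Q ^ (ν - m) := by rw [h3]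
  -- the k-vector space structure
  have halg : ∀ r : k, toF (Polynomial.C (Polynomial.C r)) =
      algebraMap k (RatFunc (RatFunc k)) r := by
    intro r
    symm
    show algebraMap k (RatFunc (RatFunc k)) r =
      (algebraMap (Polynomial (RatFunc k)) (RatFunc (RatFunc k)))
        (Polynomial.map (algebraMap (Polynomial k) (RatFunc k))
          (Polynomial.C (Polynomial.C r)))
    rw [Polynomial.map_C]
    rw [IsScalarTower.algebraMap_apply k (Polynomial (RatFunc k)) (RatFunc (RatFunc k))]
    congr 1
  have hsmul : ∀ (r : k) (u : RatFunc (RatFunc k)),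
      r • u = toF (Polynomial.C (Polynomial.C r)) * u := by
    intro r u
    rw [Algebra.smul_def, ← halg]
  set T : Finset (RatFunc (RatFunc k)) :=
    (Finset.range (X + 1) ×ˢ Finset.range (Y + 1)).image
      (fun p => toF (Polynomial.C Polynomial.X ^ p.1 * Polynomial.X ^ p.2) *
        (toF Q ^ (ν + 1))⁻¹) with hT
  set W := Submodule.span k (T : Set (RatFunc (RatFunc k))) with hW
  have hQpow0 : toF Q ^ (ν + 1) ≠ 0 := pow_ne_zero _ hQ0
  have hmemW : ∀ w ∈ S, v w ∈ W := by
    intro w hw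
    obtain ⟨B, h1, h2, h3⟩ := hvec w hw
    have hvw : v w = ∑ p ∈ Finset.range (X + 1) ×ˢ Finset.range (Y + 1),
        ((B.coeff p.2).coeff p.1) •
          (toF (Polynomial.C Polynomial.X ^ p.1 * Polynomial.X ^ p.2) *
            (toF Q ^ (ν + 1))⁻¹) := by
      calc v w = toF B * (toF Q ^ (ν + 1))⁻¹ :=
            (eq_mul_inv_iff_mul_eq₀ hQpow0).mpr h3
        _ = toF (∑ p ∈ Finset.range (X + 1) ×ˢ Finset.range (Y + 1),
              Polynomial.C (Polynomial.C ((B.coeff p.2).coeff p.1)) *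
                (Polynomial.C Polynomial.X ^ p.1 * Polynomial.X ^ p.2)) *
              (toF Q ^ (ν + 1))⁻¹ := by rw [← poly_decomp B h1 h2]
        _ = _ := by
            rw [map_sum, Finset.sum_mul]
            refine Finset.sum_congr rfl ?_
            intro p _
            rw [map_mul, hsmul]
            ring
    rw [hvw]
    refine Submodule.sum_mem _ ?_
    intro p hp
    refine Submodule.smul_mem _ _ (Submodule.subset_span ?_)
    rw [hT]
    exact Finset.mem_image_of_mem _ hp
  -- cardinalities
  have hScard : S.card * 2 = (κ + 1) * ((ν + 1) * (ν + 2)) := by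
    have hSeq : S = Finset.range (κ + 1) ×ˢ
        ((Finset.range (ν + 1) ×ˢ Finset.range (ν + 1)).filter fun p => p.1 + p.2 ≤ ν) := by
      rw [hS]
      ext w
      simp only [Finset.mem_filter, Finset.mem_product, Finset.mem_range]
      omega
    rw [hSeq, Finset.card_product, mul_assoc, card_triangle, Finset.card_range]
  have hdim : Module.finrank k W ≤ (X + 1) * (Y + 1) := by
    refine le_trans (finrank_span_finset_le_card T) ?_
    refine le_trans Finset.card_image_le ?_
    rw [Finset.card_product, Finset.card_range, Finset.card_range]
  have hcard : (X + 1) * (Y + 1) < S.card := by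
    have h2 : ((X + 1) * (Y + 1)) * 2 < S.card * 2 := by
      rw [hScard, hX, hY, hκ, hν]
      nlinarith [hdy, sq_nonneg dy, Nat.zero_le dx]
    omega
  -- linear dependence
  haveI : FiniteDimensional k W := FiniteDimensional.span_of_finite k (T.finite_toSet)
  have hnli : ¬ LinearIndependent k
      (fun i : {x // x ∈ S} => (⟨v i, hmemW i i.2⟩ : W)) := by
    intro hli
    have := hli.fintype_card_le_finrank
    rw [Fintype.card_coe] at this
    omega
  obtain ⟨g, hgsum, i0, hi0⟩ := Fintype.not_linearIndependent_iff.mp hnli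
  refine ⟨fun w => if h : w ∈ S then g ⟨w, h⟩ else 0, ⟨i0.1, i0.2, ?_⟩, ?_⟩
  · show (if h : (i0 : ℕ × ℕ × ℕ) ∈ S then g ⟨(i0 : ℕ × ℕ × ℕ), h⟩ else 0) ≠ 0
    rw [dif_pos i0.2]
    exact hi0
  have hgsum' : ∑ i : {x // x ∈ S}, g i • v i = 0 := by
    have h := congrArg (Subtype.val) hgsum
    rw [AddSubmonoidClass.coe_finset_sum] at h
    simp only [SetLike.val_smul, ZeroMemClass.coe_zero] at h
    exact h
  calc ∑ w ∈ S, toF (Polynomial.C (Polynomial.C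
          (if h : w ∈ S then g ⟨w, h⟩ else 0))) *
        (toF (Polynomial.C Polynomial.X) ^ w.1 *
          Dx^[w.2.1] (Dy^[w.2.2] (toF P / toF Q)))
      = ∑ i ∈ S.attach, g i • v i := by
        rw [← Finset.sum_attach S]
        refine Finset.sum_congr rfl ?_
        intro i _
        rw [dif_pos i.2, hsmul]
    _ = 0 := by rw [← Finset.univ_eq_attach]; exact hgsum'
end
end
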